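/- arXiv:2310.09906 — 5 statements merged into one kernel-verified Lean document; each statement's English description precedes it below -/
import Mathlib

section
/- Favard-type theorem for ℓ-LBPs: Let a_{i,j} ∈ K (1 ≤ i ≤ ℓ+1, j ≥ 0) be constants with a_{ℓ,j} ≠ 0 and a_{ℓ+1,j} ≠ 0 for all j ≥ 0, and let p_0,…,p_{ℓ−1} ∈ K[x] be monic with deg p_n = n. Define (P_n)_{n≥0} by P_n = p_n for 0 ≤ n ≤ ℓ−1 and by the (ℓ+2)-term recurrence for n ≥ ℓ (with P_{−1} = 0). Then there exists a linear functional 𝓛 : K[x,x⁻¹] → K such that (P_n)_{n≥0} is an ℓ-LBPs with respect to 𝓛; moreover, among such functionals there is exactly one satisfying 𝓛[1] = 1. -/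
open scoped BigOperators

namespace FavardAux

open Polynomial LaurentPolynomial Finset

variable {K : Type*} [Field K]

/-- The forced normalization sequence. -/
noncomputable def hseq (ℓ : ℕ) (a : ℕ → ℕ → K) : ℕ → K
  | 0 => 1
  | m + 1 => -(a (ℓ + 1) (m + 1) / a ℓ (m + 1)) * hseq ℓ a m

theorem hseq_ne (ℓ : ℕ) (a : ℕ → ℕ → K) (haℓ : ∀ j, a ℓ j ≠ 0)
    (haℓ1 : ∀ j, a (ℓ + 1) j ≠ 0) : ∀ n, hseq ℓ a n ≠ 0 := by
  intro n
  induction n with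
  | zero => simp [hseq]
  | succ m IH =>
    rw [hseq]
    exact mul_ne_zero (neg_ne_zero.mpr (div_ne_zero (haℓ1 _) (haℓ _))) IH

theorem measure_lt {ℓ m m' k k' : ℕ} (h1 : k' - m' + 1 ≤ k - m) (h2 : m' ≤ ℓ + m) :
    (ℓ + 1) * (k' - m') + m' < (ℓ + 1) * (k - m) + m := by
  have h3 : (ℓ + 1) * (k' - m' + 1) ≤ (ℓ + 1) * (k - m) := Nat.mul_le_mul_left _ h1
  rw [Nat.mul_succ] at h3
  omega

/-- The value array `V m k = 𝓛[P_m x^{-kℓ}]`. -/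
noncomputable def V (ℓ : ℕ) (hl : 1 ≤ ℓ) (a : ℕ → ℕ → K) (m k : ℕ) : K :=
  if h : k ≤ m then (if m = k then hseq ℓ a m else 0)
  else if hm : m = 0 then
    (- V ℓ hl a ℓ k
      - ∑ i ∈ (Finset.Icc 1 (ℓ - 1)).attach, a i.1 0 * V ℓ hl a (ℓ - i.1) k
      + V ℓ hl a 0 (k - 1)) / a ℓ 0
  else
    (- V ℓ hl a (m + ℓ) k
      - ∑ i ∈ (Finset.Icc 1 (ℓ - 1)).attach, a i.1 m * V ℓ hl a (m + ℓ - i.1) k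
      + V ℓ hl a m (k - 1)
      - a (ℓ + 1) m * V ℓ hl a (m - 1) (k - 1)) / a ℓ m
termination_by (ℓ + 1) * (k - m) + m
decreasing_by
  · exact measure_lt (by omega) (by omega)
  · have hi := Finset.mem_Icc.mp i.2
    exact measure_lt (by omega) (by omega)
  · exact measure_lt (by omega) (by omega)
  · exact measure_lt (by omega) (by omega)
  · have hi := Finset.mem_Icc.mp i.2
    exact measure_lt (by omega) (by omega)
  · exact measure_lt (by omega) (by omega)
  · have e : k - 1 - (m - 1) = k - m := by omega
    rw [e]; omega

theorem V_in (ℓ : ℕ) (hl : 1 ≤ ℓ) (a : ℕ → ℕ → K) {m k : ℕ} (h : k ≤ m) :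
    V ℓ hl a m k = if m = k then hseq ℓ a m else 0 := by
  rw [V, dif_pos h]

theorem V_out0 (ℓ : ℕ) (hl : 1 ≤ ℓ) (a : ℕ → ℕ → K) {k : ℕ} (h : 0 < k)
    (ha : a ℓ 0 ≠ 0) :
    V ℓ hl a 0 k * a ℓ 0 =
      - V ℓ hl a ℓ k - ∑ i ∈ Finset.Icc 1 (ℓ - 1), a i 0 * V ℓ hl a (ℓ - i) k
        + V ℓ hl a 0 (k - 1) := by
  rw [V, dif_neg (by omega), dif_pos rfl, div_mul_cancel₀ _ ha,
    Finset.sum_attach (Finset.Icc 1 (ℓ - 1)) (fun i => a i 0 * V ℓ hl a (ℓ - i) k)]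

theorem V_outm (ℓ : ℕ) (hl : 1 ≤ ℓ) (a : ℕ → ℕ → K) {m k : ℕ} (hm : m ≠ 0) (h : m < k)
    (ha : a ℓ m ≠ 0) :
    V ℓ hl a m k * a ℓ m =
      - V ℓ hl a (m + ℓ) k
        - ∑ i ∈ Finset.Icc 1 (ℓ - 1), a i m * V ℓ hl a (m + ℓ - i) k
        + V ℓ hl a m (k - 1)
        - a (ℓ + 1) m * V ℓ hl a (m - 1) (k - 1) := by
  rw [V, dif_neg (by omega), dif_neg hm, div_mul_cancel₀ _ ha,
    Finset.sum_attach (Finset.Icc 1 (ℓ - 1)) (fun i => a i m * V ℓ hl a (m + ℓ - i) k)]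




theorem recV (ℓ : ℕ) (hl : 1 ≤ ℓ) (a : ℕ → ℕ → K) (ha : ∀ j, a ℓ j ≠ 0)
    (n k : ℕ) (hn : ℓ ≤ n) (hk : 1 ≤ k) :
    V ℓ hl a n k =
      -(∑ i ∈ Finset.Icc 1 (ℓ - 1), a i (n - ℓ) * V ℓ hl a (n - i) k)
        + V ℓ hl a (n - ℓ) (k - 1)
        - a ℓ (n - ℓ) * V ℓ hl a (n - ℓ) k
        - a (ℓ + 1) (n - ℓ) * (if n = ℓ then 0 else V ℓ hl a (n - ℓ - 1) (k - 1)) := by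
  obtain ⟨m, rfl⟩ : ∃ m, n = m + ℓ := ⟨n - ℓ, (Nat.sub_add_cancel hn).symm⟩
  simp only [Nat.add_sub_cancel, Nat.add_eq_right]
  have hsub : ∀ i ∈ Finset.Icc 1 (ℓ - 1), m + ℓ - i ≥ m + 1 := by
    intro i hi; have := Finset.mem_Icc.mp hi; omega
  by_cases hkm : k ≤ m
  · -- fully in range
    have hm0 : m ≠ 0 := by omega
    rw [if_neg hm0]
    have hsum : ∑ i ∈ Finset.Icc 1 (ℓ - 1), a i m * V ℓ hl a (m + ℓ - i) k = 0 := by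
      refine Finset.sum_eq_zero fun i hi => ?_
      have h1 := hsub i hi
      rw [V_in ℓ hl a (by omega), if_neg (by omega), mul_zero]
    rw [hsum, V_in ℓ hl a (show k ≤ m + ℓ by omega), if_neg (by omega),
      V_in ℓ hl a hkm, V_in ℓ hl a (show k - 1 ≤ m by omega), if_neg (by omega),
      V_in ℓ hl a (show k - 1 ≤ m - 1 by omega)]
    by_cases hmk : m = k
    · rw [if_pos hmk, if_pos (by omega)]
      subst hmk
      obtain ⟨m', rfl⟩ : ∃ m', m = m' + 1 := ⟨m - 1, by omega⟩
      simp only [Nat.add_sub_cancel]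
      rw [hseq]
      have hz := ha (m' + 1)
      field_simp
      ring
    · rw [if_neg hmk, if_neg (by omega)]
      ring
  · -- out of range
    push_neg at hkm
    by_cases hm0 : m = 0
    · subst hm0
      rw [if_pos rfl]
      have h0 := V_out0 ℓ hl a (k := k) (show 0 < k by omega) (ha 0)
      simp only [Nat.zero_add]
      linear_combination h0
    · rw [if_neg hm0]
      have h0 := V_outm ℓ hl a hm0 hkm (ha m)
      linear_combination h0



/-- Monicity and degrees from the recurrence. -/
theorem P_monic (ℓ : ℕ) (hl : 1 ≤ ℓ) (a : ℕ → ℕ → K) (P : ℕ → Polynomial K)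
    (hinit : ∀ n : ℕ, n < ℓ → (P n).Monic ∧ (P n).natDegree = n)
    (hrec : ∀ n : ℕ, ℓ ≤ n →
      P n = -(∑ i ∈ Finset.Icc 1 (ℓ - 1), Polynomial.C (a i (n - ℓ)) * P (n - i))
        + (Polynomial.X ^ ℓ - Polynomial.C (a ℓ (n - ℓ))) * P (n - ℓ)
        - Polynomial.C (a (ℓ + 1) (n - ℓ)) * Polynomial.X ^ ℓ *
          (if n = ℓ then 0 else P (n - ℓ - 1))) :
    ∀ n : ℕ, (P n).Monic ∧ (P n).natDegree = n := by
  intro n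
  induction n using Nat.strong_induction_on with
  | _ n IH =>
    by_cases h : n < ℓ
    · exact hinit n h
    push_neg at h
    have h1 : 1 ≤ n := le_trans hl h
    have hxl : (X ^ ℓ - Polynomial.C (a ℓ (n - ℓ)) : K[X]).Monic :=
      monic_X_pow_sub_C (a ℓ (n - ℓ)) (show ℓ ≠ 0 by omega)
    have hPd := IH (n - ℓ) (by omega)
    have hBm : ((X ^ ℓ - Polynomial.C (a ℓ (n - ℓ))) * P (n - ℓ)).Monic := hxl.mul hPd.1
    have hBd : ((X ^ ℓ - Polynomial.C (a ℓ (n - ℓ))) * P (n - ℓ)).natDegree = n := by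
      rw [hxl.natDegree_mul hPd.1, natDegree_X_pow_sub_C, hPd.2]; omega
    have hS : (∑ i ∈ Finset.Icc 1 (ℓ - 1), Polynomial.C (a i (n - ℓ)) * P (n - i)).natDegree ≤ n - 1 := by
      refine Polynomial.natDegree_sum_le_of_forall_le _ _ fun i hi => ?_
      have hi2 := Finset.mem_Icc.mp hi
      refine le_trans (natDegree_C_mul_le _ _) ?_
      rw [(IH (n - i) (by omega)).2]; omega
    have hD : (Polynomial.C (a (ℓ + 1) (n - ℓ)) * X ^ ℓ *
        (if n = ℓ then 0 else P (n - ℓ - 1))).natDegree ≤ n - 1 := by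
      by_cases hnl : n = ℓ
      · simp [hnl]
      · rw [if_neg hnl]
        refine le_trans (natDegree_mul_le) ?_
        have e2 : (Polynomial.C (a (ℓ + 1) (n - ℓ)) * X ^ ℓ : K[X]).natDegree ≤ ℓ :=
          le_trans natDegree_mul_le (by simp)
        have e3 := (IH (n - ℓ - 1) (by omega)).2
        omega
    set B : K[X] := (X ^ ℓ - Polynomial.C (a ℓ (n - ℓ))) * P (n - ℓ) with hB
    set R : K[X] := -(∑ i ∈ Finset.Icc 1 (ℓ - 1), Polynomial.C (a i (n - ℓ)) * P (n - i))
      - Polynomial.C (a (ℓ + 1) (n - ℓ)) * X ^ ℓ * (if n = ℓ then 0 else P (n - ℓ - 1)) with hR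
    have key : P n = B + R := by rw [hrec n h, hB, hR]; ring
    have hRd : R.natDegree ≤ n - 1 := by
      rw [hR]
      refine le_trans (natDegree_sub_le _ _) ?_
      rw [natDegree_neg]
      omega
    have hRB : R.degree < B.degree := by
      have hBords : B.degree = (n : WithBot ℕ) := by
        rw [Polynomial.degree_eq_natDegree hBm.ne_zero, hBd]
      rw [hBords]
      refine lt_of_le_of_lt (Polynomial.degree_le_natDegree) ?_
      exact_mod_cast (by omega : R.natDegree < n)
    constructor
    · rw [key]; exact hBm.add_of_left hRB
    · rw [key, Polynomial.natDegree_eq_of_degree_eq (degree_add_eq_left_of_degree_lt hRB), hBd]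

/-- Generic triangular telescoping sequence. -/
noncomputable def tele (P : ℕ → Polynomial K) (g : ℕ → K) : ℕ → K
  | n => g n - ∑ j ∈ (Finset.range n).attach, (P n).coeff j.1 * tele P g j.1
termination_by n => n
decreasing_by exact Finset.mem_range.mp j.2

theorem tele_sum (P : ℕ → Polynomial K) (hP : ∀ n, (P n).coeff n = 1) (g : ℕ → K) (n : ℕ) :
    ∑ s ∈ Finset.range (n + 1), (P n).coeff s * tele P g s = g n := by
  rw [Finset.sum_range_succ, hP n, one_mul, tele,
    ← Finset.sum_attach (Finset.range n) (fun j => (P n).coeff j * tele P g j)]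
  ring

/-- The moments. -/
noncomputable def mu (ℓ : ℕ) (hl : 1 ≤ ℓ) (a : ℕ → ℕ → K) (P : ℕ → Polynomial K) (u : ℤ) : K :=
  if 0 ≤ u then tele P (fun n => if n = 0 then 1 else 0) u.toNat
  else tele P (fun r => V ℓ hl a r (((-u).toNat + ℓ - 1) / ℓ))
    ((((-u).toNat + ℓ - 1) / ℓ) * ℓ - (-u).toNat)

theorem mu_nonneg (ℓ : ℕ) (hl : 1 ≤ ℓ) (a : ℕ → ℕ → K) (P : ℕ → Polynomial K) (s : ℕ) :
    mu ℓ hl a P (s : ℤ) = tele P (fun n => if n = 0 then 1 else 0) s := by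
  rw [mu, if_pos (by positivity), Int.toNat_natCast]

theorem mu_neg (ℓ : ℕ) (hl : 1 ≤ ℓ) (a : ℕ → ℕ → K) (P : ℕ → Polynomial K)
    (k r : ℕ) (hk : 1 ≤ k) (hr : r < ℓ) :
    mu ℓ hl a P ((r : ℤ) + (-(k : ℤ) * ℓ)) = tele P (fun x => V ℓ hl a x k) r := by
  have hkl : ℓ ≤ k * ℓ := Nat.le_mul_of_pos_left ℓ hk
  have hcast : ((k * ℓ : ℕ) : ℤ) = (k : ℤ) * ℓ := by push_cast; ring
  have e0 : (r : ℤ) + (-(k : ℤ) * ℓ) = (r : ℤ) - ((k * ℓ : ℕ) : ℤ) := by push_cast; ring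
  rw [e0]
  have hneg : ¬ (0 ≤ (r : ℤ) - ((k * ℓ : ℕ) : ℤ)) := by omega
  rw [mu, if_neg hneg]
  have h1 : (-((r : ℤ) - ((k * ℓ : ℕ) : ℤ))).toNat = k * ℓ - r := by omega
  rw [h1]
  have h2 : (k * ℓ - r + ℓ - 1) / ℓ = k := by
    refine Nat.div_eq_of_lt_le (by omega) ?_
    rw [Nat.succ_mul]
    omega
  rw [h2]
  congr 1
  omega




noncomputable def LL (μ : ℤ → K) : LaurentPolynomial K →ₗ[K] K :=
  Finsupp.linearCombination K μ ∘ₗ (AddMonoidAlgebra.coeffLinearEquiv K).toLinearMap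

theorem LL_single (μ : ℤ → K) (u : ℤ) (c : K) :
    LL μ (AddMonoidAlgebra.single u c) = c * μ u := by
  rw [show (LL μ (AddMonoidAlgebra.single u c) : K) =
    Finsupp.linearCombination K μ (Finsupp.single u c : ℤ →₀ K) from rfl,
    Finsupp.linearCombination_single, smul_eq_mul]

theorem C_mul_eq_smul (c : K) (x : LaurentPolynomial K) :
    LaurentPolynomial.C c * x = c • x := by
  rw [Algebra.smul_def, ← LaurentPolynomial.C_eq_algebraMap]

theorem M_C_mul (M : LaurentPolynomial K →ₗ[K] K) (c : K) (x : LaurentPolynomial K) :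
    M (LaurentPolynomial.C c * x) = c * M x := by
  rw [C_mul_eq_smul, map_smul, smul_eq_mul]

/-- Expansion of `toLaurent p * T t` as a sum of monomials. -/
theorem mulT_expand (p : K[X]) (t : ℤ) :
    Polynomial.toLaurent p * LaurentPolynomial.T t =
      ∑ s ∈ Finset.range (p.natDegree + 1),
        LaurentPolynomial.C (p.coeff s) * LaurentPolynomial.T ((s : ℤ) + t) := by
  conv_lhs => rw [p.as_sum_range]
  rw [map_sum, Finset.sum_mul]
  refine Finset.sum_congr rfl fun s _ => ?_
  rw [Polynomial.toLaurent_C_mul_T, mul_assoc, ← LaurentPolynomial.T_add]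

theorem LL_eval (μ : ℤ → K) (p : K[X]) (t : ℤ) :
    LL μ (Polynomial.toLaurent p * LaurentPolynomial.T t) =
      ∑ s ∈ Finset.range (p.natDegree + 1), p.coeff s * μ ((s : ℤ) + t) := by
  rw [mulT_expand, map_sum]
  refine Finset.sum_congr rfl fun s _ => ?_
  rw [← LaurentPolynomial.single_eq_C_mul_T, LL_single]

/-- The recurrence satisfied by the values of any linear functional. -/
theorem recVal (ℓ : ℕ) (a : ℕ → ℕ → K) (P : ℕ → Polynomial K)
    (hrec : ∀ n : ℕ, ℓ ≤ n →
      P n = -(∑ i ∈ Finset.Icc 1 (ℓ - 1), Polynomial.C (a i (n - ℓ)) * P (n - i))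
        + (Polynomial.X ^ ℓ - Polynomial.C (a ℓ (n - ℓ))) * P (n - ℓ)
        - Polynomial.C (a (ℓ + 1) (n - ℓ)) * Polynomial.X ^ ℓ *
          (if n = ℓ then 0 else P (n - ℓ - 1)))
    (M : LaurentPolynomial K →ₗ[K] K) (n k : ℕ) (hn : ℓ ≤ n) (hk : 1 ≤ k) :
    M (Polynomial.toLaurent (P n) * LaurentPolynomial.T (-(k : ℤ) * ℓ)) =
      -(∑ i ∈ Finset.Icc 1 (ℓ - 1), a i (n - ℓ) *
          M (Polynomial.toLaurent (P (n - i)) * LaurentPolynomial.T (-(k : ℤ) * ℓ)))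
        + M (Polynomial.toLaurent (P (n - ℓ)) * LaurentPolynomial.T (-((k - 1 : ℕ) : ℤ) * ℓ))
        - a ℓ (n - ℓ) *
            M (Polynomial.toLaurent (P (n - ℓ)) * LaurentPolynomial.T (-(k : ℤ) * ℓ))
        - a (ℓ + 1) (n - ℓ) * (if n = ℓ then 0 else
            M (Polynomial.toLaurent (P (n - ℓ - 1)) * LaurentPolynomial.T (-((k - 1 : ℕ) : ℤ) * ℓ))) := by
  have htt : ((ℓ : ℤ)) + (-(k : ℤ) * ℓ) = -((k - 1 : ℕ) : ℤ) * ℓ := by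
    have : ((k - 1 : ℕ) : ℤ) = (k : ℤ) - 1 := by omega
    rw [this]; ring
  have hTx : ∀ x : LaurentPolynomial K,
      LaurentPolynomial.T (ℓ : ℤ) * x * LaurentPolynomial.T (-(k : ℤ) * ℓ) =
        x * LaurentPolynomial.T (-((k - 1 : ℕ) : ℤ) * ℓ) := by
    intro x
    rw [mul_comm (LaurentPolynomial.T (ℓ : ℤ)) x, mul_assoc, ← LaurentPolynomial.T_add, htt]
  have pieceS : Polynomial.toLaurent
        (∑ i ∈ Finset.Icc 1 (ℓ - 1), Polynomial.C (a i (n - ℓ)) * P (n - i)) *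
          LaurentPolynomial.T (-(k : ℤ) * ℓ) =
      ∑ i ∈ Finset.Icc 1 (ℓ - 1), LaurentPolynomial.C (a i (n - ℓ)) *
        (Polynomial.toLaurent (P (n - i)) * LaurentPolynomial.T (-(k : ℤ) * ℓ)) := by
    rw [map_sum, Finset.sum_mul]
    refine Finset.sum_congr rfl fun i _ => ?_
    rw [Polynomial.toLaurent_C_mul_eq, mul_assoc]
  have pieceB : Polynomial.toLaurent
        ((Polynomial.X ^ ℓ - Polynomial.C (a ℓ (n - ℓ))) * P (n - ℓ)) *
          LaurentPolynomial.T (-(k : ℤ) * ℓ) =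
      Polynomial.toLaurent (P (n - ℓ)) * LaurentPolynomial.T (-((k - 1 : ℕ) : ℤ) * ℓ)
        - LaurentPolynomial.C (a ℓ (n - ℓ)) *
            (Polynomial.toLaurent (P (n - ℓ)) * LaurentPolynomial.T (-(k : ℤ) * ℓ)) := by
    rw [map_mul, map_sub, Polynomial.toLaurent_X_pow, Polynomial.toLaurent_C, sub_mul, sub_mul,
      hTx, mul_assoc]
  rw [hrec n hn]
  by_cases hnl : n = ℓ
  · rw [if_pos hnl, if_pos hnl, mul_zero, mul_zero, map_sub, map_add, map_neg, map_zero,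
      sub_zero, add_mul, neg_mul, pieceS, pieceB, map_add, map_neg, map_sum]
    simp only [M_C_mul, map_sub]
    ring
  · rw [if_neg hnl, if_neg hnl]
    have pieceD : Polynomial.toLaurent
          (Polynomial.C (a (ℓ + 1) (n - ℓ)) * Polynomial.X ^ ℓ * P (n - ℓ - 1)) *
            LaurentPolynomial.T (-(k : ℤ) * ℓ) =
        LaurentPolynomial.C (a (ℓ + 1) (n - ℓ)) *
          (Polynomial.toLaurent (P (n - ℓ - 1)) * LaurentPolynomial.T (-((k - 1 : ℕ) : ℤ) * ℓ)) := by
      rw [map_mul, map_mul, Polynomial.toLaurent_C, Polynomial.toLaurent_X_pow, mul_assoc,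
        mul_assoc, ← mul_assoc (LaurentPolynomial.T (ℓ : ℤ)), hTx]
    rw [map_sub, map_add, map_neg, sub_mul, add_mul, neg_mul, pieceS, pieceB, pieceD,
      map_sub, map_add, map_neg, map_sum, map_sub]
    simp only [M_C_mul]
    ring




theorem Wlem (ℓ : ℕ) (hl : 1 ≤ ℓ) (a : ℕ → ℕ → K) (ha : ∀ j, a ℓ j ≠ 0)
    (P : ℕ → Polynomial K)
    (hinit : ∀ n : ℕ, n < ℓ → (P n).Monic ∧ (P n).natDegree = n)
    (hrec : ∀ n : ℕ, ℓ ≤ n →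
      P n = -(∑ i ∈ Finset.Icc 1 (ℓ - 1), Polynomial.C (a i (n - ℓ)) * P (n - i))
        + (Polynomial.X ^ ℓ - Polynomial.C (a ℓ (n - ℓ))) * P (n - ℓ)
        - Polynomial.C (a (ℓ + 1) (n - ℓ)) * Polynomial.X ^ ℓ *
          (if n = ℓ then 0 else P (n - ℓ - 1))) :
    ∀ n k : ℕ, LL (mu ℓ hl a P) (Polynomial.toLaurent (P n) *
      LaurentPolynomial.T (-(k : ℤ) * ℓ)) = V ℓ hl a n k := by
  have Pm := P_monic ℓ hl a P hinit hrec
  have hco : ∀ n, (P n).coeff n = 1 := fun n => by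
    have h2 := (Pm n).1.coeff_natDegree
    rwa [(Pm n).2] at h2
  intro n
  induction n using Nat.strong_induction_on with
  | _ n IH =>
  intro k
  rcases Nat.eq_zero_or_pos k with hk0 | hk
  · subst hk0
    simp only [Nat.cast_zero, neg_zero, zero_mul]
    rw [LL_eval, (Pm n).2]
    have hc : ∀ s ∈ Finset.range (n + 1),
        (P n).coeff s * mu ℓ hl a P ((s : ℤ) + 0) =
          (P n).coeff s * tele P (fun x => if x = 0 then 1 else 0) s := by
      intro s _
      rw [add_zero, mu_nonneg]
    rw [Finset.sum_congr rfl hc, tele_sum P hco, V_in ℓ hl a (Nat.zero_le n)]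
    by_cases hn0 : n = 0 <;> simp [hn0, hseq]
  · by_cases hnl : n < ℓ
    · rw [LL_eval, (Pm n).2]
      have hc : ∀ s ∈ Finset.range (n + 1),
          (P n).coeff s * mu ℓ hl a P ((s : ℤ) + (-(k : ℤ) * ℓ)) =
            (P n).coeff s * tele P (fun x => V ℓ hl a x k) s := by
        intro s hs
        have hs2 := Finset.mem_range.mp hs
        rw [mu_neg ℓ hl a P k s hk (by omega)]
      rw [Finset.sum_congr rfl hc, tele_sum P hco]
    · push_neg at hnl
      rw [recVal ℓ a P hrec (LL (mu ℓ hl a P)) n k hnl hk]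
      have e1 : ∀ i ∈ Finset.Icc 1 (ℓ - 1),
          a i (n - ℓ) * LL (mu ℓ hl a P) (Polynomial.toLaurent (P (n - i)) *
            LaurentPolynomial.T (-(k : ℤ) * ℓ)) = a i (n - ℓ) * V ℓ hl a (n - i) k := by
        intro i hi
        have hi2 := Finset.mem_Icc.mp hi
        rw [IH (n - i) (by omega) k]
      rw [Finset.sum_congr rfl e1, IH (n - ℓ) (by omega) k, IH (n - ℓ) (by omega) (k - 1)]
      by_cases hne : n = ℓ
      · rw [if_pos hne]
        rw [recV ℓ hl a ha n k hnl hk, if_pos hne]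
      · rw [if_neg hne, IH (n - ℓ - 1) (by omega) (k - 1)]
        rw [recV ℓ hl a ha n k hnl hk, if_neg hne]




/-- The normalization sequence is forced. -/
theorem h_forced (ℓ : ℕ) (hl : 1 ≤ ℓ) (a : ℕ → ℕ → K) (ha : ∀ j, a ℓ j ≠ 0)
    (P : ℕ → Polynomial K) (hP0 : P 0 = 1)
    (hrec : ∀ n : ℕ, ℓ ≤ n →
      P n = -(∑ i ∈ Finset.Icc 1 (ℓ - 1), Polynomial.C (a i (n - ℓ)) * P (n - i))
        + (Polynomial.X ^ ℓ - Polynomial.C (a ℓ (n - ℓ))) * P (n - ℓ)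
        - Polynomial.C (a (ℓ + 1) (n - ℓ)) * Polynomial.X ^ ℓ *
          (if n = ℓ then 0 else P (n - ℓ - 1)))
    (M : LaurentPolynomial K →ₗ[K] K) (h' : ℕ → K)
    (hA : ∀ n : ℕ, ∀ k : ℕ, k ≤ n →
      M (Polynomial.toLaurent (P n) * LaurentPolynomial.T (-(k : ℤ) * ℓ)) =
        if n = k then h' n else 0)
    (hone : M 1 = 1) :
    ∀ n, h' n = hseq ℓ a n := by
  intro n
  induction n with
  | zero =>
    have h0 := hA 0 0 le_rfl
    rw [if_pos rfl] at h0
    rw [hseq, ← h0, hP0]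
    simp only [Polynomial.toLaurent_one, Nat.cast_zero, neg_zero, zero_mul,
      LaurentPolynomial.T_zero, mul_one, hone]
  | succ m IH =>
    have hv := recVal ℓ a P hrec M (m + 1 + ℓ) (m + 1) (by omega) (by omega)
    simp only [Nat.add_sub_cancel] at hv
    rw [hA (m + 1 + ℓ) (m + 1) (by omega), if_neg (by omega)] at hv
    have e1 : ∀ i ∈ Finset.Icc 1 (ℓ - 1),
        a i (m + 1) * M (Polynomial.toLaurent (P (m + 1 + ℓ - i)) *
          LaurentPolynomial.T (-((m + 1 : ℕ) : ℤ) * ℓ)) = 0 := by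
      intro i hi
      have hi2 := Finset.mem_Icc.mp hi
      rw [hA (m + 1 + ℓ - i) (m + 1) (by omega), if_neg (by omega), mul_zero]
    rw [Finset.sum_congr rfl e1, Finset.sum_const_zero] at hv
    rw [hA (m + 1) m (by omega)] at hv
    rw [hA (m + 1) (m + 1) le_rfl, if_pos rfl, if_neg (by omega),
      if_neg (by omega)] at hv
    rw [hA m m le_rfl, if_pos rfl, IH] at hv
    have hz := ha (m + 1)
    rw [hseq, neg_mul, div_mul_eq_mul_div, ← neg_div, eq_div_iff hz]
    linear_combination hv




theorem uniq_vals (ℓ : ℕ) (hl : 1 ≤ ℓ) (a : ℕ → ℕ → K) (ha : ∀ j, a ℓ j ≠ 0)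
    (P : ℕ → Polynomial K)
    (hrec : ∀ n : ℕ, ℓ ≤ n →
      P n = -(∑ i ∈ Finset.Icc 1 (ℓ - 1), Polynomial.C (a i (n - ℓ)) * P (n - i))
        + (Polynomial.X ^ ℓ - Polynomial.C (a ℓ (n - ℓ))) * P (n - ℓ)
        - Polynomial.C (a (ℓ + 1) (n - ℓ)) * Polynomial.X ^ ℓ *
          (if n = ℓ then 0 else P (n - ℓ - 1)))
    (M : LaurentPolynomial K →ₗ[K] K)
    (hA : ∀ n k : ℕ, k ≤ n →
      M (Polynomial.toLaurent (P n) * LaurentPolynomial.T (-(k : ℤ) * ℓ)) =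
        if n = k then hseq ℓ a n else 0) :
    ∀ m j : ℕ, M (Polynomial.toLaurent (P m) * LaurentPolynomial.T (-(j : ℤ) * ℓ)) =
      V ℓ hl a m j := by
  suffices key : ∀ N m j : ℕ, (ℓ + 1) * (j - m) + m ≤ N →
      M (Polynomial.toLaurent (P m) * LaurentPolynomial.T (-(j : ℤ) * ℓ)) = V ℓ hl a m j by
    exact fun m j => key ((ℓ + 1) * (j - m) + m) m j le_rfl
  intro N
  induction N using Nat.strong_induction_on with
  | _ N IHN =>
  intro m j hN
  by_cases hj : j ≤ m
  · rw [hA m j hj, V_in ℓ hl a hj]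
  · push_neg at hj
    have hj1 : 1 ≤ j := by omega
    have hv := recVal ℓ a P hrec M (m + ℓ) j (by omega) hj1
    have hv' := recV ℓ hl a ha (m + ℓ) j (by omega) hj1
    simp only [Nat.add_sub_cancel] at hv hv'
    have e0 : M (Polynomial.toLaurent (P (m + ℓ)) * LaurentPolynomial.T (-(j : ℤ) * ℓ)) =
        V ℓ hl a (m + ℓ) j :=
      IHN _ (lt_of_lt_of_le (measure_lt (by omega) (by omega)) hN) _ _ le_rfl
    rw [e0] at hv
    have esum : ∀ i ∈ Finset.Icc 1 (ℓ - 1),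
        a i m * M (Polynomial.toLaurent (P (m + ℓ - i)) * LaurentPolynomial.T (-(j : ℤ) * ℓ)) =
          a i m * V ℓ hl a (m + ℓ - i) j := by
      intro i hi
      have hi2 := Finset.mem_Icc.mp hi
      rw [IHN _ (lt_of_lt_of_le (measure_lt (by omega) (by omega)) hN) _ _ le_rfl]
    rw [Finset.sum_congr rfl esum] at hv
    have e1 : M (Polynomial.toLaurent (P m) * LaurentPolynomial.T (-((j - 1 : ℕ) : ℤ) * ℓ)) =
        V ℓ hl a m (j - 1) :=
      IHN _ (lt_of_lt_of_le (measure_lt (by omega) (by omega)) hN) _ _ le_rfl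
    rw [e1] at hv
    by_cases hm0 : m = 0
    · rw [if_pos (by omega)] at hv
      rw [if_pos (by omega)] at hv'
      have heq : a ℓ m * M (Polynomial.toLaurent (P m) * LaurentPolynomial.T (-(j : ℤ) * ℓ)) =
          a ℓ m * V ℓ hl a m j := by linear_combination hv - hv'
      exact mul_left_cancel₀ (ha m) heq
    · rw [if_neg (by omega)] at hv
      rw [if_neg (by omega)] at hv'
      have e2 : M (Polynomial.toLaurent (P (m - 1)) *
          LaurentPolynomial.T (-((j - 1 : ℕ) : ℤ) * ℓ)) = V ℓ hl a (m - 1) (j - 1) := by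
        refine IHN ((ℓ + 1) * ((j - 1) - (m - 1)) + (m - 1)) ?_ _ _ le_rfl
        rw [show (j - 1) - (m - 1) = j - m by omega]
        omega
      rw [e2] at hv
      have heq : a ℓ m * M (Polynomial.toLaurent (P m) * LaurentPolynomial.T (-(j : ℤ) * ℓ)) =
          a ℓ m * V ℓ hl a m j := by linear_combination hv - hv'
      exact mul_left_cancel₀ (ha m) heq

theorem poly_agree (P : ℕ → Polynomial K)
    (hco : ∀ n, (P n).coeff n = 1) (hd : ∀ n, (P n).natDegree = n)
    (M M' : LaurentPolynomial K →ₗ[K] K)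
    (hagree : ∀ n, M (Polynomial.toLaurent (P n)) = M' (Polynomial.toLaurent (P n))) :
    ∀ q : Polynomial K, M (Polynomial.toLaurent q) = M' (Polynomial.toLaurent q) := by
  have hP0 : P 0 = 1 := by
    have h1 : P 0 = Polynomial.C ((P 0).coeff 0) :=
      Polynomial.eq_C_of_natDegree_le_zero (le_of_eq (hd 0))
    rw [h1, hco 0, map_one]
  have h1MM : M 1 = M' 1 := by
    have := hagree 0
    rwa [hP0, Polynomial.toLaurent_one] at this
  suffices key : ∀ N : ℕ, ∀ q : Polynomial K, q.natDegree ≤ N →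
      M (Polynomial.toLaurent q) = M' (Polynomial.toLaurent q) by
    exact fun q => key q.natDegree q le_rfl
  intro N
  induction N with
  | zero =>
    intro q hq
    obtain ⟨c, rfl⟩ : ∃ c, q = Polynomial.C c :=
      ⟨q.coeff 0, Polynomial.eq_C_of_natDegree_le_zero hq⟩
    rw [Polynomial.toLaurent_C, ← mul_one (LaurentPolynomial.C c), M_C_mul, M_C_mul, h1MM]
  | succ N IHN =>
    intro q hq
    set c := q.coeff (N + 1) with hc
    set r : Polynomial K := q - Polynomial.C c * P (N + 1) with hr
    have hdeg : r.natDegree ≤ N := by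
      rw [Polynomial.natDegree_le_iff_coeff_eq_zero]
      intro j hj
      rw [hr, Polynomial.coeff_sub, Polynomial.coeff_C_mul]
      by_cases hjq : j = N + 1
      · subst hjq
        rw [show (P (N + 1)).coeff (N + 1) = 1 from hco (N + 1), mul_one, hc, sub_self]
      · rw [Polynomial.coeff_eq_zero_of_natDegree_lt (lt_of_le_of_lt hq (by omega)),
          Polynomial.coeff_eq_zero_of_natDegree_lt (by rw [hd]; omega)]
        simp
    have hqe : q = Polynomial.C c * P (N + 1) + r := by rw [hr]; ring
    rw [hqe, map_add, Polynomial.toLaurent_C_mul_eq, map_add, map_add, M_C_mul, M_C_mul,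
      IHN r hdeg, hagree (N + 1)]

theorem Tneg_agree (ℓ : ℕ) (P : ℕ → Polynomial K)
    (hco : ∀ n, (P n).coeff n = 1) (hd : ∀ n, (P n).natDegree = n)
    (M M' : LaurentPolynomial K →ₗ[K] K)
    (hg : ∀ r k : ℕ, r < ℓ → 1 ≤ k →
      M (Polynomial.toLaurent (P r) * LaurentPolynomial.T (-(k : ℤ) * ℓ)) =
        M' (Polynomial.toLaurent (P r) * LaurentPolynomial.T (-(k : ℤ) * ℓ))) :
    ∀ k : ℕ, 1 ≤ k → ∀ r : ℕ, r < ℓ →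
      M (LaurentPolynomial.T ((r : ℤ) + -(k : ℤ) * ℓ)) =
        M' (LaurentPolynomial.T ((r : ℤ) + -(k : ℤ) * ℓ)) := by
  intro k hk r
  induction r using Nat.strong_induction_on with
  | _ r IHr =>
  intro hr
  have h1 := hg r k hr hk
  rw [mulT_expand, map_sum, map_sum, hd r] at h1
  simp only [M_C_mul] at h1
  rw [Finset.sum_range_succ, Finset.sum_range_succ, hco r, one_mul, one_mul] at h1
  have hlow : ∀ s ∈ Finset.range r,
      (P r).coeff s * M (LaurentPolynomial.T ((s : ℤ) + -(k : ℤ) * ℓ)) =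
        (P r).coeff s * M' (LaurentPolynomial.T ((s : ℤ) + -(k : ℤ) * ℓ)) := by
    intro s hs
    have hs2 := Finset.mem_range.mp hs
    rw [IHr s hs2 (by omega)]
  rw [Finset.sum_congr rfl hlow] at h1
  exact add_left_cancel h1

theorem exists_block (ℓ : ℕ) (hl : 1 ≤ ℓ) (u : ℤ) (hu : u < 0) :
    ∃ k r : ℕ, 1 ≤ k ∧ r < ℓ ∧ u = (r : ℤ) + -(k : ℤ) * ℓ := by
  set s : ℕ := (-u).toNat with hs
  have hs1 : 1 ≤ s := by omega
  set k : ℕ := (s + ℓ - 1) / ℓ with hk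
  have hdm := Nat.div_add_mod (s + ℓ - 1) ℓ
  have hmod := Nat.mod_lt (s + ℓ - 1) (show 0 < ℓ by omega)
  have hk1 : 1 ≤ k := by
    rcases Nat.eq_zero_or_pos k with h0 | h0
    · exfalso; rw [← hk] at hdm; rw [h0, mul_zero] at hdm; omega
    · exact h0
  rw [← hk] at hdm
  refine ⟨k, ℓ * k - s, hk1, by omega, ?_⟩
  have h5 : (s : ℤ) + ((ℓ * k - s : ℕ) : ℤ) = (k : ℤ) * (ℓ : ℤ) := by
    have h6 : s + (ℓ * k - s) = ℓ * k := by omega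
    have h7 : ((s + (ℓ * k - s) : ℕ) : ℤ) = ((ℓ * k : ℕ) : ℤ) := by rw [h6]
    push_cast at h7
    linarith [h7]
  have hsu : (s : ℤ) = -u := by omega
  linear_combination hsu - h5


end FavardAux

open scoped BigOperators

/-- The `(ℓ+2)`-term recurrence
`P n = -∑_{i=1}^{ℓ-1} a i (n-ℓ) * P (n-i) + (X^ℓ - a ℓ (n-ℓ)) * P (n-ℓ)
      - a (ℓ+1) (n-ℓ) * X^ℓ * P (n-ℓ-1)` for `n ≥ ℓ`, with the convention
`P_{-1} = 0` (i.e. the last term is dropped when `n = ℓ`). -/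
def SatisfiesRec {K : Type*} [Field K] (ℓ : ℕ) (a : ℕ → ℕ → K)
    (P : ℕ → Polynomial K) : Prop :=
  ∀ n : ℕ, ℓ ≤ n →
    P n = -(∑ i ∈ Finset.Icc 1 (ℓ - 1), Polynomial.C (a i (n - ℓ)) * P (n - i))
      + (Polynomial.X ^ ℓ - Polynomial.C (a ℓ (n - ℓ))) * P (n - ℓ)
      - Polynomial.C (a (ℓ + 1) (n - ℓ)) * Polynomial.X ^ ℓ *
        (if n = ℓ then 0 else P (n - ℓ - 1))

/-- `(P n)` is an `ℓ`-LBPs with respect to the linear functional `L` on Laurent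
polynomials: each `P n` is monic of exact degree `n` and
`L (P n • x^{-kℓ}) = h n δ_{n,k}` for `0 ≤ k ≤ n` with `h n ≠ 0`. -/
def IsLBP {K : Type*} [Field K] (ℓ : ℕ) (P : ℕ → Polynomial K)
    (L : LaurentPolynomial K →ₗ[K] K) : Prop :=
  (∀ n : ℕ, (P n).Monic ∧ (P n).natDegree = n) ∧
  ∃ h : ℕ → K, ∀ n : ℕ, h n ≠ 0 ∧ ∀ k : ℕ, k ≤ n →
    L (Polynomial.toLaurent (P n) * LaurentPolynomial.T (-(k : ℤ) * ℓ)) =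
      if n = k then h n else 0

/-- **Favard-type theorem for ℓ-LBPs.** If `P` is defined by the `(ℓ+2)`-term
recurrence with coefficients satisfying `a ℓ j ≠ 0` and `a (ℓ+1) j ≠ 0`, from
monic initial polynomials of exact degrees `0, …, ℓ-1`, then some linear
functional makes `P` an `ℓ`-LBPs, and among such functionals there is exactly
one with `L 1 = 1`. -/
theorem favard_type_theorem {K : Type*} [Field K] (ℓ : ℕ) (hℓ : 1 ≤ ℓ)
    (a : ℕ → ℕ → K) (haℓ : ∀ j : ℕ, a ℓ j ≠ 0) (haℓ1 : ∀ j : ℕ, a (ℓ + 1) j ≠ 0)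
    (P : ℕ → Polynomial K)
    (hinit : ∀ n : ℕ, n < ℓ → (P n).Monic ∧ (P n).natDegree = n)
    (hrec : SatisfiesRec ℓ a P) :
    (∃ L : LaurentPolynomial K →ₗ[K] K, IsLBP ℓ P L) ∧
    (∃! L : LaurentPolynomial K →ₗ[K] K, IsLBP ℓ P L ∧ L 1 = 1) := by
  classical
  have hrec' : ∀ n : ℕ, ℓ ≤ n →
      P n = -(∑ i ∈ Finset.Icc 1 (ℓ - 1), Polynomial.C (a i (n - ℓ)) * P (n - i))
        + (Polynomial.X ^ ℓ - Polynomial.C (a ℓ (n - ℓ))) * P (n - ℓ)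
        - Polynomial.C (a (ℓ + 1) (n - ℓ)) * Polynomial.X ^ ℓ *
          (if n = ℓ then 0 else P (n - ℓ - 1)) := hrec
  set L : LaurentPolynomial K →ₗ[K] K := FavardAux.LL (FavardAux.mu ℓ hℓ a P) with hLdef
  have hLV := FavardAux.Wlem ℓ hℓ a haℓ P hinit hrec'
  have Pm := FavardAux.P_monic ℓ hℓ a P hinit hrec'
  have hIs : IsLBP ℓ P L := by
    refine ⟨Pm, FavardAux.hseq ℓ a, fun n => ⟨FavardAux.hseq_ne ℓ a haℓ haℓ1 n, fun k hk => ?_⟩⟩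
    rw [hLdef, hLV n k, FavardAux.V_in ℓ hℓ a hk]
  have hL1 : L 1 = 1 := by
    rw [hLdef, show (1 : LaurentPolynomial K) = AddMonoidAlgebra.single (0 : ℤ) (1 : K) from rfl,
      FavardAux.LL_single, one_mul, show ((0 : ℤ)) = ((0 : ℕ) : ℤ) from rfl,
      FavardAux.mu_nonneg, FavardAux.tele]
    simp
  refine ⟨⟨L, hIs⟩, L, ⟨hIs, hL1⟩, ?_⟩
  rintro M ⟨⟨hmon', h', hh'⟩, hM1⟩
  have hP0 : P 0 = 1 := by
    have h0 := hinit 0 (by omega)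
    exact h0.1.natDegree_eq_zero.mp h0.2
  have hhs : ∀ n, h' n = FavardAux.hseq ℓ a n :=
    FavardAux.h_forced ℓ hℓ a haℓ P hP0 hrec' M h' (fun n k hk => (hh' n).2 k hk) hM1
  have hA : ∀ n k : ℕ, k ≤ n →
      M (Polynomial.toLaurent (P n) * LaurentPolynomial.T (-(k : ℤ) * ℓ)) =
        if n = k then FavardAux.hseq ℓ a n else 0 := by
    intro n k hk
    rw [(hh' n).2 k hk, hhs n]
  have hMV := FavardAux.uniq_vals ℓ hℓ a haℓ P hrec' M hA
  have hagree : ∀ m j : ℕ,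
      M (Polynomial.toLaurent (P m) * LaurentPolynomial.T (-(j : ℤ) * ℓ)) =
        L (Polynomial.toLaurent (P m) * LaurentPolynomial.T (-(j : ℤ) * ℓ)) := by
    intro m j
    rw [hMV m j, hLdef, hLV m j]
  have hco : ∀ n, (P n).coeff n = 1 := fun n => by
    have h2 := (Pm n).1.coeff_natDegree
    rwa [(Pm n).2] at h2
  have hd : ∀ n, (P n).natDegree = n := fun n => (Pm n).2
  have hagreeP : ∀ n, M (Polynomial.toLaurent (P n)) = L (Polynomial.toLaurent (P n)) := by
    intro n
    have h1 := hagree n 0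
    simpa using h1
  have hpoly := FavardAux.poly_agree P hco hd M L hagreeP
  have hT : ∀ u : ℤ, M (LaurentPolynomial.T u) = L (LaurentPolynomial.T u) := by
    intro u
    rcases le_or_gt 0 u with hu | hu
    · have : (LaurentPolynomial.T u : LaurentPolynomial K) =
          Polynomial.toLaurent (Polynomial.X ^ u.toNat : Polynomial K) := by
        rw [Polynomial.toLaurent_X_pow]
        congr 1
        omega
      rw [this]
      exact hpoly _
    · obtain ⟨k, r, hk, hr, rfl⟩ := FavardAux.exists_block ℓ hℓ u hu
      exact FavardAux.Tneg_agree ℓ P hco hd M L (fun r' k' hr' hk' => hagree r' k') k hk r hr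
  refine LinearMap.ext fun f => ?_
  refine AddMonoidAlgebra.induction f (by rw [map_zero, map_zero]) ?_
  intro u c g hu hc IH
  rw [map_add, map_add, IH]
  congr 1
  rw [LaurentPolynomial.single_eq_C_mul_T, FavardAux.M_C_mul, FavardAux.M_C_mul, hT u]
end

section
/- Let a_{i,j} ∈ K (1 ≤ i ≤ ℓ+1, j ≥ 0) satisfy a_{ℓ,j} ≠ 0 and a_{ℓ+1,j} ≠ 0 for all j, let p_0,…,p_{ℓ−1} ∈ K[x] be monic with deg p_n = n, and let (P_n)_{n≥0} be defined by P_n = p_n for 0 ≤ n ≤ ℓ−1 and the (ℓ+2)-term recurrence for n ≥ ℓ (with P_{−1} = 0). Then for every k ≥ 0, the ℓ×ℓ determinant det( [x^j]P_{k+i}(x) )_{i,j=0}^{ℓ−1} equals (−1)^{kℓ} ∏_{i=0}^{k−1} a_{ℓ,i}, where [x^j]Q denotes the coefficient of x^j in the polynomial Q. -/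
open scoped BigOperators

/-- Auxiliary: determinant after replacing a row by a finite sum. -/
lemma det_updateRow_finset_sum {n R ι : Type*} [DecidableEq n] [Fintype n] [CommRing R]
    (A : Matrix n n R) (j : n) (s : Finset ι) (f : ι → n → R) :
    (A.updateRow j (∑ i ∈ s, f i)).det = ∑ i ∈ s, (A.updateRow j (f i)).det := by
  classical
  induction s using Finset.induction with
  | empty =>
      rw [Finset.sum_empty, Finset.sum_empty]
      exact Matrix.det_eq_zero_of_row_eq_zero j fun j' => by simp
  | insert _ _ h ih =>
      rw [Finset.sum_insert h, Matrix.det_updateRow_add, ih, Finset.sum_insert h]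

/-- For `P` defined by the `(ℓ+2)`-term recurrence from monic initial
polynomials of degrees `0,…,ℓ-1`, the determinant
`det([x^j] P_{k+i})_{i,j=0}^{ℓ-1}` equals `(-1)^{kℓ} ∏_{i=0}^{k-1} a ℓ i`. -/
theorem det_coeff_eq {K : Type*} [Field K] (ℓ : ℕ) (hℓ : 1 ≤ ℓ)
    (a : ℕ → ℕ → K) (haℓ : ∀ j : ℕ, a ℓ j ≠ 0) (haℓ1 : ∀ j : ℕ, a (ℓ + 1) j ≠ 0)
    (P : ℕ → Polynomial K)
    (hinit : ∀ n : ℕ, n < ℓ → (P n).Monic ∧ (P n).natDegree = n)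
    (hrec : SatisfiesRec ℓ a P) :
    ∀ k : ℕ,
      Matrix.det (fun i j : Fin ℓ => (P (k + (i : ℕ))).coeff (j : ℕ)) =
        (-1 : K) ^ (k * ℓ) * ∏ i ∈ Finset.range k, a ℓ i := by
  obtain ⟨m, rfl⟩ : ∃ m, ℓ = m + 1 := ⟨ℓ - 1, by omega⟩
  -- key coefficient identity
  have key : ∀ (k j : ℕ), j < m + 1 →
      (P (m + 1 + k)).coeff j =
        (∑ i ∈ Finset.Icc 1 m, -(a i k) * (P (m + 1 + k - i)).coeff j)
          + -(a (m + 1) k) * (P k).coeff j := by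
    intro k j hj
    have h := hrec (m + 1 + k) (by omega)
    have h1 : m + 1 + k - (m + 1) = k := by omega
    have h2 : m + 1 - 1 = m := by omega
    rw [h1, h2] at h
    have hz : ∀ Q : Polynomial K, ((Polynomial.X ^ (m + 1) * Q : Polynomial K)).coeff j = 0 := by
      intro Q
      rw [Polynomial.X_pow_mul, Polynomial.coeff_mul_X_pow']
      simp [Nat.not_le.mpr hj]
    rw [h, sub_mul, mul_assoc]
    simp only [Polynomial.coeff_add, Polynomial.coeff_sub, Polynomial.coeff_neg,
      Polynomial.finset_sum_coeff, Polynomial.coeff_C_mul, hz, neg_mul]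
    rw [Finset.sum_neg_distrib]
    ring
  intro k
  induction k with
  | zero =>
      have hdet : Matrix.det (fun i j : Fin (m + 1) => (P (0 + (i : ℕ))).coeff (j : ℕ)) =
          ∏ i : Fin (m + 1), (P (0 + (i : ℕ))).coeff (i : ℕ) := by
        apply Matrix.det_of_lowerTriangular
        intro i j hij
        have hij' : (i : ℕ) < (j : ℕ) := hij
        exact Polynomial.coeff_eq_zero_of_natDegree_lt
          (by rw [(hinit (0 + i) (by omega)).2]; omega)
      rw [hdet]
      simp only [Nat.zero_mul, pow_zero, Finset.range_zero, Finset.prod_empty, mul_one]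
      apply Finset.prod_eq_one
      intro i _
      have h := hinit (0 + (i : ℕ)) (by omega)
      have : (P (0 + (i : ℕ))).coeff ((P (0 + (i : ℕ))).natDegree) = 1 := h.1.coeff_natDegree
      rw [h.2] at this
      simpa using this
  | succ k ih =>
      set L : Fin (m + 1) := Fin.last m with hL
      set B : Matrix (Fin (m + 1)) (Fin (m + 1)) K :=
        fun i j : Fin (m + 1) => (P (k + 1 + (i : ℕ))).coeff (j : ℕ) with hB
      set A : Matrix (Fin (m + 1)) (Fin (m + 1)) K :=
        fun i j : Fin (m + 1) => (P (k + (i : ℕ))).coeff (j : ℕ) with hA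
      have hrow : B L = (∑ i ∈ Finset.Icc 1 m,
            (-(a i k)) • B ⟨m - i, by omega⟩)
          + (-(a (m + 1) k)) • (fun j : Fin (m + 1) => (P k).coeff (j : ℕ)) := by
        funext j
        have hj : (j : ℕ) < m + 1 := j.2
        have hk := key k j hj
        simp only [Finset.sum_apply, Pi.add_apply, Pi.smul_apply, smul_eq_mul, hB, hL,
          Fin.val_last]
        have e1 : k + 1 + m = m + 1 + k := by omega
        rw [e1, hk]
        congr 1
        apply Finset.sum_congr rfl
        intro i hi
        rw [Finset.mem_Icc] at hi
        have : k + 1 + (m - i) = m + 1 + k - i := by omega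
        rw [this]
      have hsplit : B.det = ∑ i ∈ Finset.Icc 1 m,
            (-(a i k)) * (B.updateRow L (B ⟨m - i, by omega⟩)).det
          + (-(a (m + 1) k)) *
            (B.updateRow L (fun j : Fin (m + 1) => (P k).coeff (j : ℕ))).det := by
        conv_lhs => rw [← Matrix.updateRow_eq_self B L, hrow]
        rw [Matrix.det_updateRow_add, det_updateRow_finset_sum, Matrix.det_updateRow_smul]
        congr 1
        apply Finset.sum_congr rfl
        intro i _
        rw [Matrix.det_updateRow_smul]
      have hzero : ∀ i ∈ Finset.Icc 1 m,
          (B.updateRow L (B ⟨m - i, by omega⟩)).det = 0 := by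
        intro i hi
        rw [Finset.mem_Icc] at hi
        have hne : (⟨m - i, by omega⟩ : Fin (m + 1)) ≠ L := by
          rw [hL]
          intro hEq
          have hv := congrArg Fin.val hEq
          have hlastval : (Fin.last m).val = m := rfl
          rw [hlastval] at hv
          simp only [Fin.val_mk] at hv
          omega
        apply Matrix.det_zero_of_row_eq hne
        rw [Matrix.updateRow_ne hne, Matrix.updateRow_self]
      have hperm : B.updateRow L (fun j : Fin (m + 1) => (P k).coeff (j : ℕ)) =
          A.submatrix (finRotate (m + 1)) id := by
        funext i j
        rcases eq_or_ne i L with rfl | hiL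
        · rw [Matrix.updateRow_self]
          rw [Matrix.submatrix_apply]
          simp only [Matrix.submatrix_apply, finRotate_succ_apply, id_eq, hA, hL]
          rw [Fin.last_add_one]
          simp
        · rw [Matrix.updateRow_ne hiL]
          have hlt : i < Fin.last m := lt_of_le_of_ne (Fin.le_last i) hiL
          rw [Matrix.submatrix_apply]
          simp only [Matrix.submatrix_apply, finRotate_succ_apply, id_eq, hA, hB]
          rw [Fin.val_add_one_of_lt hlt]
          have he : k + ((i : ℕ) + 1) = k + 1 + (i : ℕ) := by omega
          rw [he]
      have hsign : (A.submatrix (finRotate (m + 1)) id).det = (-1 : K) ^ m * A.det := by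
        rw [Matrix.det_permute, sign_finRotate]
        simp
      rw [hsplit, Finset.sum_congr rfl (fun i hi => by rw [hzero i hi, mul_zero]),
        Finset.sum_const_zero, zero_add, hperm, hsign, ih, Finset.prod_range_succ]
      have hpow : (k + 1) * (m + 1) = k * (m + 1) + m + 1 := by ring
      rw [hpow, pow_add, pow_add]
      ring
end

section
/- Let (P_n)_{n≥0} be the primitive sequence defined by the (ℓ+2)-term recurrence with P_n(x) = x^n for 0 ≤ n ≤ ℓ−1, and let S be an ℓ×ℓ lower triangular matrix over K with all diagonal entries equal to 1. Let (P̃_n)_{n≥0} satisfy the same recurrence with the same coefficients, with initial polynomials given by (P̃_0, P̃_1, …, P̃_{ℓ−1})ᵗ = S·(1, x, …, x^{ℓ−1})ᵗ. Let (μ_n)_{n∈ℤ} and (μ̃_n)_{n∈ℤ} be the moments μ_n = 𝓛[x^n], μ̃_n = 𝓛̃[x^n] of the unique linear functionals 𝓛, 𝓛̃ with 𝓛[1] = 𝓛̃[1] = 1 making (P_n) and (P̃_n) respectively ℓ-LBPs. Then for every m ∈ ℤ, the column vector (μ̃_{mℓ}, μ̃_{mℓ+1}, …, μ̃_{mℓ+ℓ−1})ᵗ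 equals S⁻¹·(μ_{mℓ}, μ_{mℓ+1}, …, μ_{mℓ+ℓ−1})ᵗ. -/
open scoped BigOperators

section Aux

open Polynomial LaurentPolynomial

variable {K : Type*} [Field K]

/-- The pairing `∑ v, coeff q v * f (v + s)`. -/
noncomputable def Bpair (q : Polynomial K) (f : ℤ → K) (s : ℤ) : K :=
  q.sum fun v c => c * f ((v : ℤ) + s)

variable (f : ℤ → K) (s : ℤ)

lemma Bpair_apply (q : K[X]) :
    Bpair q f s = ∑ v ∈ q.support, q.coeff v * f ((v : ℤ) + s) := rfl

lemma Bpair_zero : Bpair (0 : K[X]) f s = 0 := Polynomial.sum_zero_index _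

lemma Bpair_monomial (v : ℕ) (c : K) :
    Bpair (Polynomial.monomial v c) f s = c * f ((v:ℤ) + s) :=
  Polynomial.sum_monomial_index c _ (by simp)

lemma Bpair_add (p q : K[X]) : Bpair (p + q) f s = Bpair p f s + Bpair q f s :=
  Polynomial.sum_add_index _ _ _ (by simp) (fun _ _ _ => add_mul _ _ _)

lemma Bpair_neg (p : K[X]) : Bpair (-p) f s = -Bpair p f s := by
  have h := Bpair_add f s p (-p)
  simp only [add_neg_cancel, Bpair_zero] at h
  exact eq_neg_of_add_eq_zero_right h.symm

lemma Bpair_sub (p q : K[X]) : Bpair (p - q) f s = Bpair p f s - Bpair q f s := by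
  rw [sub_eq_add_neg, Bpair_add, Bpair_neg, sub_eq_add_neg]

lemma Bpair_finset_sum {α : Type*} (t : Finset α) (p : α → K[X]) :
    Bpair (∑ i ∈ t, p i) f s = ∑ i ∈ t, Bpair (p i) f s := by
  classical
  induction t using Finset.induction_on with
  | empty => simp [Bpair_zero]
  | insert _ _ h ih => rw [Finset.sum_insert h, Bpair_add, ih, Finset.sum_insert h]

lemma Bpair_C_mul (c : K) (p : K[X]) : Bpair (Polynomial.C c * p) f s = c * Bpair p f s := by
  induction p using Polynomial.induction_on' with
  | add p q hp hq => rw [mul_add, Bpair_add, hp, hq, Bpair_add, mul_add]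
  | monomial v b => rw [Polynomial.C_mul_monomial, Bpair_monomial, Bpair_monomial, mul_assoc]

lemma Bpair_X_pow_mul (m : ℕ) (p : K[X]) :
    Bpair (Polynomial.X ^ m * p) f s = Bpair p f (s + (m:ℤ)) := by
  induction p using Polynomial.induction_on' with
  | add p q hp hq => rw [mul_add, Bpair_add, hp, hq, Bpair_add]
  | monomial v b =>
      rw [Polynomial.X_pow_eq_monomial, Polynomial.monomial_mul_monomial, one_mul,
        Bpair_monomial, Bpair_monomial]
      congr 1
      push_cast
      ring

lemma Bpair_ite (c : Prop) [Decidable c] (p q : K[X]) :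
    Bpair (if c then p else q) f s = if c then Bpair p f s else Bpair q f s :=
  apply_ite (Bpair · f s) c p q

lemma Bpair_sub_fun (g : ℤ → K) (p : K[X]) :
    Bpair p (fun d => f d - g d) s = Bpair p f s - Bpair p g s := by
  unfold Bpair Polynomial.sum
  rw [← Finset.sum_sub_distrib]
  exact Finset.sum_congr rfl fun v _ => by ring

lemma Bpair_eval (L : LaurentPolynomial K →ₗ[K] K) (hf : ∀ n : ℤ, f n = L (T n)) (p : K[X]) :
    L (Polynomial.toLaurent p * T s) = Bpair p f s := by
  induction p using Polynomial.induction_on' with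
  | add p q hp hq => rw [map_add, add_mul, map_add, hp, hq, Bpair_add]
  | monomial v c =>
      rw [Polynomial.toLaurent_C_mul_T, mul_assoc, ← T_add, ← single_eq_C_mul_T,
        Bpair_monomial, hf]
      have : (AddMonoidAlgebra.single ((v:ℤ) + s) c : LaurentPolynomial K) = c • T ((v:ℤ)+s) := by
        rw [show (T ((v:ℤ)+s) : LaurentPolynomial K) = AddMonoidAlgebra.single ((v:ℤ)+s) (1:K) from rfl,
          AddMonoidAlgebra.smul_single', mul_one]
      rw [this, map_smul, smul_eq_mul]

/-- The recurrence modulo `X ^ ℓ` : low coefficients satisfy an `(ℓ+1)`-term recurrence. -/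
lemma coeff_rec (ℓ : ℕ) (a : ℕ → ℕ → K) (Q : ℕ → Polynomial K)
    (hQ : SatisfiesRec ℓ a Q) (n : ℕ) (hn : ℓ ≤ n) (v : ℕ) (hv : v < ℓ) :
    (Q n).coeff v = -(∑ i ∈ Finset.Icc 1 (ℓ - 1), a i (n - ℓ) * (Q (n - i)).coeff v)
      - a ℓ (n - ℓ) * (Q (n - ℓ)).coeff v := by
  have hx : ∀ p : K[X], (Polynomial.X ^ ℓ * p).coeff v = 0 := by
    intro p
    rw [mul_comm, Polynomial.coeff_mul_X_pow']
    simp [Nat.not_le.mpr hv]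
  rw [hQ n hn]
  rw [mul_assoc]
  simp only [Polynomial.coeff_add, Polynomial.coeff_sub, Polynomial.coeff_neg,
    Polynomial.finset_sum_coeff, Polynomial.coeff_C_mul, sub_mul, hx, Polynomial.coeff_X_pow]
  ring

end Aux

/-- The moments of an `ℓ`-LBPs equivalent (same recurrence coefficients) to a
primitive one, with initial polynomials obtained from the monomials by a
unitriangular matrix `S`, are obtained from the primitive moments by `S⁻¹`,
`ℓ` consecutive moments at a time. -/
theorem moments_of_equivalent_LBP {K : Type*} [Field K] (ℓ : ℕ) (hℓ : 1 ≤ ℓ)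
    (a : ℕ → ℕ → K) (haℓ : ∀ j : ℕ, a ℓ j ≠ 0) (haℓ1 : ∀ j : ℕ, a (ℓ + 1) j ≠ 0)
    (P Pt : ℕ → Polynomial K)
    (S : Matrix (Fin ℓ) (Fin ℓ) K)
    (hS_lower : ∀ i j : Fin ℓ, i < j → S i j = 0)
    (hS_diag : ∀ i : Fin ℓ, S i i = 1)
    (hP_init : ∀ n : ℕ, n < ℓ → P n = Polynomial.X ^ n)
    (hP_rec : SatisfiesRec ℓ a P)
    (hPt_init : ∀ (n : ℕ) (hn : n < ℓ),
      Pt n = ∑ j : Fin ℓ, Polynomial.C (S ⟨n, hn⟩ j) * Polynomial.X ^ (j : ℕ))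
    (hPt_rec : SatisfiesRec ℓ a Pt)
    (L Lt : LaurentPolynomial K →ₗ[K] K)
    (hL : IsLBP ℓ P L) (hL1 : L 1 = 1)
    (hLt : IsLBP ℓ Pt Lt) (hLt1 : Lt 1 = 1)
    (μ μt : ℤ → K)
    (hμ : ∀ n : ℤ, μ n = L (LaurentPolynomial.T n))
    (hμt : ∀ n : ℤ, μt n = Lt (LaurentPolynomial.T n)) :
    ∀ m : ℤ, (fun i : Fin ℓ => μt (m * ℓ + (i : ℕ))) =
      S⁻¹.mulVec (fun i : Fin ℓ => μ (m * ℓ + (i : ℕ))) := by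
  classical
  obtain ⟨hPdeg, h, hh⟩ := hL
  obtain ⟨hPtdeg, ht, hht⟩ := hLt
  have hℓ0 : (ℓ:ℤ) ≠ 0 := by positivity
  have hℓpos : (0:ℤ) < (ℓ:ℤ) := by exact_mod_cast hℓ
  have hmod : ∀ d : ℤ, (d % (ℓ:ℤ)).toNat < ℓ := by
    intro d
    have h1 : 0 ≤ d % (ℓ:ℤ) := Int.emod_nonneg d hℓ0
    have h2 : d % (ℓ:ℤ) < (ℓ:ℤ) := Int.emod_lt_of_pos d hℓpos
    omega
  set G : ℤ → K := fun d =>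
    ∑ j : Fin ℓ, S ⟨(d % (ℓ:ℤ)).toNat, hmod d⟩ j * μt ((ℓ:ℤ) * (d / (ℓ:ℤ)) + (j:ℕ))
    with hGdef
  have hGblock : ∀ (t : ℤ) (v : ℕ) (hv : v < ℓ),
      G ((v:ℤ) + (ℓ:ℤ) * t) = ∑ j : Fin ℓ, S ⟨v, hv⟩ j * μt ((ℓ:ℤ) * t + (j:ℕ)) := by
    intro t v hv
    have hidx : (((v:ℤ) + (ℓ:ℤ) * t) % (ℓ:ℤ)).toNat = v := by
      rw [Int.add_mul_emod_self_left,
        Int.emod_eq_of_lt (Int.natCast_nonneg v) (by exact_mod_cast hv)]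
      exact Int.toNat_natCast v
    have hdiv : ((v:ℤ) + (ℓ:ℤ) * t) / (ℓ:ℤ) = t := by
      rw [Int.add_mul_ediv_left _ t hℓ0,
        Int.ediv_eq_zero_of_lt (Int.natCast_nonneg v) (by exact_mod_cast hv), zero_add]
    simp only [hGdef]
    refine Finset.sum_congr rfl fun j _ => ?_
    rw [hdiv]
    congr 2
    exact Fin.val_injective hidx
  set D : ℤ → K := fun d => G d - μ d with hDdef
  -- evaluation of the LBP conditions via Bpair
  have hBμ : ∀ n k : ℕ, k ≤ n →
      Bpair (P n) μ (-(k:ℤ) * (ℓ:ℤ)) = if n = k then h n else 0 := fun n k hk =>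
    (Bpair_eval μ _ L hμ (P n)).symm.trans ((hh n).2 k hk)
  have hBμt : ∀ n k : ℕ, k ≤ n →
      Bpair (Pt n) μt (-(k:ℤ) * (ℓ:ℤ)) = if n = k then ht n else 0 := fun n k hk =>
    (Bpair_eval μt _ Lt hμt (Pt n)).symm.trans ((hht n).2 k hk)
  -- the key transformation identity
  have key : ∀ n : ℕ, ∀ t : ℤ,
      Bpair (P n) G ((ℓ:ℤ) * t) = Bpair (Pt n) μt ((ℓ:ℤ) * t) := by
    intro n
    induction n using Nat.strong_induction_on with
    | _ n IH =>
    intro t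
    by_cases hn : n < ℓ
    · rw [hP_init n hn, hPt_init n hn, Polynomial.X_pow_eq_monomial, Bpair_monomial, one_mul,
        hGblock t n hn, Bpair_finset_sum]
      refine Finset.sum_congr rfl fun j _ => ?_
      rw [Bpair_C_mul, Polynomial.X_pow_eq_monomial, Bpair_monomial, one_mul]
      congr 2
      ring
    · push_neg at hn
      have e1 : (ℓ:ℤ) * t + ((ℓ:ℕ):ℤ) = (ℓ:ℤ) * (t + 1) := by push_cast; ring
      rw [hP_rec n hn, hPt_rec n hn]
      simp only [sub_mul, mul_assoc, mul_ite, mul_zero, Bpair_add, Bpair_sub, Bpair_neg,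
        Bpair_finset_sum, Bpair_C_mul, Bpair_X_pow_mul, Bpair_ite, Bpair_zero, e1]
      have h1 : ∀ i ∈ Finset.Icc 1 (ℓ - 1),
          a i (n - ℓ) * Bpair (P (n - i)) G ((ℓ:ℤ) * t)
            = a i (n - ℓ) * Bpair (Pt (n - i)) μt ((ℓ:ℤ) * t) := by
        intro i hi
        obtain ⟨hi1, _⟩ := Finset.mem_Icc.mp hi
        rw [IH (n - i) (by omega) t]
      rw [Finset.sum_congr rfl h1, IH (n - ℓ) (by omega) t, IH (n - ℓ) (by omega) (t + 1)]
      by_cases hne : n = ℓ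
      · simp [hne]
      · rw [if_neg hne, if_neg hne, IH (n - ℓ - 1) (by omega) (t + 1)]
  -- the orthogonality conditions for D
  have hBD : ∀ n k : ℕ, k < n → Bpair (P n) D ((ℓ:ℤ) * (-(k:ℤ))) = 0 := by
    intro n k hk
    have h1 := hBμ n k hk.le
    have h2 := hBμt n k hk.le
    rw [if_neg hk.ne'] at h1 h2
    have h3 := key n (-(k:ℤ))
    have e : (ℓ:ℤ) * (-(k:ℤ)) = -(k:ℤ) * (ℓ:ℤ) := by ring
    rw [e] at h3 ⊢
    simp only [hDdef]
    rw [Bpair_sub_fun, h3, h2, h1, sub_zero]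
  -- moment 0
  have hμt0 : μt 0 = 1 := by rw [hμt, LaurentPolynomial.T_zero, hLt1]
  have hμ0 : μ 0 = 1 := by rw [hμ, LaurentPolynomial.T_zero, hL1]
  have hD0 : D 0 = 0 := by
    have hG0 : G 0 = 1 := by
      have e0 : (0:ℤ) = ((0:ℕ):ℤ) + (ℓ:ℤ) * 0 := by simp
      rw [e0, hGblock 0 0 hℓ]
      rw [Finset.sum_eq_single (⟨0, hℓ⟩ : Fin ℓ)]
      · rw [hS_diag]
        simp [hμt0]
      · intro b _ hb
        rw [hS_lower _ b ?_, zero_mul]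
        refine Fin.lt_def.mpr ?_
        have hbv : (b:ℕ) ≠ 0 := fun h0 => hb (Fin.ext h0)
        simpa using Nat.pos_of_ne_zero hbv
      · intro hmem
        exact absurd (Finset.mem_univ _) hmem
    simp only [hDdef]
    rw [hG0, hμ0, sub_self]
  -- positive moments
  have hpos : ∀ d : ℕ, D (d:ℤ) = 0 := by
    intro d
    induction d using Nat.strong_induction_on with
    | _ d IH =>
    rcases Nat.eq_zero_or_pos d with rfl | hd
    · simpa using hD0
    · have hb := hBD d 0 hd
      have e : (ℓ:ℤ) * (-((0:ℕ):ℤ)) = 0 := by simp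
      rw [e, Bpair_apply] at hb
      have h2 : ∑ v ∈ (P d).support, (P d).coeff v * D ((v:ℤ) + 0)
          = (P d).coeff d * D ((d:ℤ) + 0) := by
        refine Finset.sum_eq_single d (fun v hv hne => ?_) (fun hd' => ?_)
        · have hvd : v < d := lt_of_le_of_ne
            (by rw [← (hPdeg d).2]; exact Polynomial.le_natDegree_of_mem_supp v hv) hne
          rw [add_zero, IH v hvd, mul_zero]
        · have : (P d).coeff d = 0 := Polynomial.notMem_support_iff.mp hd'
          rw [this, zero_mul]
      rw [h2] at hb
      have hc : (P d).coeff d = 1 := by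
        have h1 := (hPdeg d).1.coeff_natDegree
        rwa [(hPdeg d).2] at h1
      rw [hc, one_mul, add_zero] at hb
      exact hb
  -- all moments, block by block
  have hneg : ∀ k : ℕ, ∀ d : ℤ, -(k:ℤ) * (ℓ:ℤ) ≤ d → D d = 0 := by
    intro k
    induction k with
    | zero =>
      intro d hd
      norm_num at hd
      lift d to ℕ using hd
      exact hpos d
    | succ k IH =>
      intro d hd
      by_cases hcase : -(k:ℤ) * (ℓ:ℤ) ≤ d
      · exact IH d hcase
      · push_neg at hcase
        set s : ℤ := (ℓ:ℤ) * (-((k:ℤ) + 1)) with hsdef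
        set g : ℕ → K := fun n => ∑ v ∈ Finset.range ℓ, (P n).coeff v * D ((v:ℤ) + s)
          with hgdef
        have hg0 : ∀ n : ℕ, k + 2 ≤ n → g n = 0 := by
          intro n hn
          have hb := hBD n (k + 1) (by omega)
          have es : (ℓ:ℤ) * (-(((k+1:ℕ)):ℤ)) = s := by rw [hsdef]; push_cast; ring
          rw [es, Bpair_apply] at hb
          rw [← Finset.sum_filter_add_sum_filter_not (P n).support (fun v => v < ℓ)] at hb
          have h2 : ∑ v ∈ (P n).support.filter (fun v => ¬ v < ℓ),
              (P n).coeff v * D ((v:ℤ) + s) = 0 := by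
            refine Finset.sum_eq_zero fun v hv => ?_
            have hvℓ : ℓ ≤ v := by simpa using (Finset.mem_filter.mp hv).2
            have hD : D ((v:ℤ) + s) = 0 := by
              refine IH _ ?_
              rw [hsdef]
              have : ((ℓ:ℤ)) ≤ (v:ℤ) := by exact_mod_cast hvℓ
              nlinarith
            rw [hD, mul_zero]
          rw [h2, add_zero] at hb
          have hsub : (P n).support.filter (fun v => v < ℓ) ⊆ Finset.range ℓ := fun v hv =>
            Finset.mem_range.mpr (Finset.mem_filter.mp hv).2
          have hz : ∀ v ∈ Finset.range ℓ, v ∉ (P n).support.filter (fun v => v < ℓ) →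
              (P n).coeff v * D ((v:ℤ) + s) = 0 := by
            intro v hvr hvf
            have hns : v ∉ (P n).support := fun hs =>
              hvf (Finset.mem_filter.mpr ⟨hs, Finset.mem_range.mp hvr⟩)
            rw [Polynomial.notMem_support_iff.mp hns, zero_mul]
          show ∑ v ∈ Finset.range ℓ, (P n).coeff v * D ((v:ℤ) + s) = 0
          rw [← Finset.sum_subset hsub hz]
          exact hb
        have hgrec : ∀ n : ℕ, ℓ ≤ n →
            g n = -(∑ i ∈ Finset.Icc 1 (ℓ - 1), a i (n - ℓ) * g (n - i))
              - a ℓ (n - ℓ) * g (n - ℓ) := by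
          intro n hn
          simp only [hgdef]
          have h1 : ∀ v ∈ Finset.range ℓ, (P n).coeff v * D ((v:ℤ) + s)
              = (-(∑ i ∈ Finset.Icc 1 (ℓ - 1), a i (n - ℓ) * (P (n - i)).coeff v)
                - a ℓ (n - ℓ) * (P (n - ℓ)).coeff v) * D ((v:ℤ) + s) := fun v hv => by
            rw [coeff_rec ℓ a P hP_rec n hn v (Finset.mem_range.mp hv)]
          rw [Finset.sum_congr rfl h1]
          simp only [sub_mul, neg_mul, Finset.sum_mul, mul_assoc]
          rw [Finset.sum_sub_distrib, Finset.sum_neg_distrib, Finset.sum_comm]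
          congr 2
          · refine Finset.sum_congr rfl fun i _ => ?_
            rw [← Finset.mul_sum]
          · rw [← Finset.mul_sum]
        have hgall : ∀ j n : ℕ, k + 2 ≤ n + j → g n = 0 := by
          intro j
          induction j with
          | zero => intro n hn; exact hg0 n (by omega)
          | succ j IHj =>
            intro n hn
            by_cases hc : k + 2 ≤ n + j
            · exact IHj n hc
            · have hrec := hgrec (n + ℓ) (by omega)
              have hz1 : g (n + ℓ) = 0 := IHj (n + ℓ) (by omega)
              have hz2 : ∀ i ∈ Finset.Icc 1 (ℓ - 1),
                  a i ((n + ℓ) - ℓ) * g ((n + ℓ) - i) = 0 := by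
                intro i hi
                obtain ⟨hi1, hi2⟩ := Finset.mem_Icc.mp hi
                rw [IHj ((n + ℓ) - i) (by omega), mul_zero]
              rw [hz1, Finset.sum_eq_zero hz2, Nat.add_sub_cancel] at hrec
              rw [neg_zero, zero_sub] at hrec
              have hz3 : a ℓ n * g n = 0 := neg_eq_zero.mp hrec.symm
              exact (mul_eq_zero.mp hz3).resolve_left (haℓ n)
        -- extract the block
        have h1 : s ≤ d := by
          rw [hsdef]
          have : -((k:ℤ) + 1) * (ℓ:ℤ) ≤ d := by push_cast at hd; linarith
          linarith
        have h2 : d < s + (ℓ:ℤ) := by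
          rw [hsdef]
          nlinarith
        obtain ⟨v, hvℓ, rfl⟩ : ∃ v : ℕ, v < ℓ ∧ d = (v:ℤ) + s := by
          refine ⟨(d - s).toNat, by omega, by omega⟩
        have hgv0 := hgall (k + 2) v (by omega)
        have hgv : g v = D ((v:ℤ) + s) := by
          simp only [hgdef]
          rw [hP_init v hvℓ]
          rw [Finset.sum_eq_single v (fun w hw hne => ?_) (fun hv' => ?_)]
          · simp [Polynomial.coeff_X_pow]
          · simp [Polynomial.coeff_X_pow, hne]
          · exact absurd (Finset.mem_range.mpr hvℓ) hv'
        rw [← hgv]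
        exact hgv0
  have hDzero : ∀ d : ℤ, D d = 0 := by
    intro d
    refine hneg d.natAbs d ?_
    rcases le_or_gt 0 d with hd | hd
    · have h0 : (0:ℤ) ≤ (d.natAbs : ℤ) * (ℓ:ℤ) := by positivity
      linarith
    · have h1 : (d.natAbs : ℤ) = -d := by omega
      rw [h1, neg_neg]
      nlinarith
  -- assemble
  intro m
  have hblock : (fun i : Fin ℓ => μ (m * (ℓ:ℤ) + ((i:ℕ):ℤ)))
      = S.mulVec (fun j : Fin ℓ => μt (m * (ℓ:ℤ) + ((j:ℕ):ℤ))) := by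
    funext i
    have hG := hGblock m (i:ℕ) i.isLt
    have hD := hDzero (((i:ℕ):ℤ) + (ℓ:ℤ) * m)
    simp only [hDdef] at hD
    have hμG : μ (((i:ℕ):ℤ) + (ℓ:ℤ) * m) = G (((i:ℕ):ℤ) + (ℓ:ℤ) * m) :=
      (sub_eq_zero.mp hD).symm
    rw [show m * (ℓ:ℤ) + ((i:ℕ):ℤ) = ((i:ℕ):ℤ) + (ℓ:ℤ) * m by ring, hμG, hG]
    rw [Matrix.mulVec, dotProduct]
    refine Finset.sum_congr rfl fun j _ => ?_
    rw [show (⟨(i:ℕ), i.isLt⟩ : Fin ℓ) = i from Fin.eta i i.isLt, mul_comm (ℓ:ℤ) m]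
  have hSdet : IsUnit S.det := by
    rw [Matrix.det_of_lowerTriangular S
      (fun i j hij => hS_lower i j (OrderDual.toDual_lt_toDual.mp hij))]
    simp [hS_diag]
  have hSinv : S⁻¹ * S = 1 := Matrix.nonsing_inv_mul S hSdet
  funext i
  rw [hblock, Matrix.mulVec_mulVec, hSinv, Matrix.one_mulVec]
end

section
/- Let (P_n)_{n≥0} be defined by the (ℓ+2)-term recurrence with the primitive initial condition P_n(x) = x^n for 0 ≤ n ≤ ℓ−1. Then for every n ≥ 0, the polynomial identity ∑_{η ∈ F_n} w(η)·x^{width(η)} = P_n(x) holds, where F_n is the (finite) set of Favard paths of height n. -/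
open scoped BigOperators

section Paths

variable {σ : Type} {K : Type*}

/-- Final point of a path given by its initial point and list of steps. -/
def endPt (vec : σ → ℤ × ℤ) : ℤ × ℤ → List σ → ℤ × ℤ
  | p, [] => p
  | p, s :: rest => endPt vec (p + vec s) rest

/-- All vertices (starting points of steps together with the final point)
of a path. -/
def verts (vec : σ → ℤ × ℤ) : ℤ × ℤ → List σ → List (ℤ × ℤ)
  | p, [] => [p]
  | p, s :: rest => p :: verts vec (p + vec s) rest

/-- Weight of a path: product of the weights of its steps, each weight
depending on the step and on its starting point. -/
def pathWt [Field K] (vec : σ → ℤ × ℤ) (w : σ → ℤ × ℤ → K) :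
    ℤ × ℤ → List σ → K
  | _, [] => 1
  | p, s :: rest => w s p * pathWt vec w (p + vec s) rest

/-- Every step of the path, placed at its starting point, satisfies `ok`. -/
def stepsOK (vec : σ → ℤ × ℤ) (ok : σ → ℤ × ℤ → Prop) :
    ℤ × ℤ → List σ → Prop
  | _, [] => True
  | p, s :: rest => ok s p ∧ stepsOK vec ok (p + vec s) rest

end Paths

section Favard

variable {K : Type*} [Field K]

/-- Steps of pre-Favard paths: `(true, i)` is the step `χ_i = (i,i)`
(`1 ≤ i ≤ ℓ`), `(false, i)` is the step `α_i = (0,i)` for `1 ≤ i ≤ ℓ`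
and `α_{ℓ+1} = (ℓ, ℓ+1)`. -/
def fvec (ℓ : ℕ) : Bool × ℕ → ℤ × ℤ
  | (true, i) => ((i : ℤ), (i : ℤ))
  | (false, i) => if i ≤ ℓ then (0, (i : ℤ)) else ((ℓ : ℤ), (ℓ : ℤ) + 1)

/-- Weight of a Favard step: `χ_i` has weight `1`; `α_i` starting at
`y`-coordinate `t` has weight `-a i (t + i - 1)`. -/
def fWt (a : ℕ → ℕ → K) : Bool × ℕ → ℤ × ℤ → K
  | (true, _), _ => 1
  | (false, i), q => -a i (q.2 + i - 1).toNat

/-- A Favard path (recorded as its list of steps, the initial point being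
`(0, -ℓ+1)`): the steps are among `χ_1, …, χ_ℓ, α_1, …, α_{ℓ+1}`; any step
`χ_i` with `i ≤ ℓ-1` occurs only as the first step; and every step `α_i`
starts at a `y`-coordinate `t` with `t + i - 1 ≥ 0`. -/
def IsFavard (ℓ : ℕ) (ω : List (Bool × ℕ)) : Prop :=
  (∀ s ∈ ω, 1 ≤ s.2 ∧ (s.1 = true → s.2 ≤ ℓ) ∧ (s.1 = false → s.2 ≤ ℓ + 1)) ∧
  (∀ s ∈ ω.tail, s.1 = true → s.2 = ℓ) ∧
  stepsOK (fvec ℓ) (fun s q => s.1 = false → 0 ≤ q.2 + s.2 - 1)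
    (0, 1 - (ℓ : ℤ)) ω

/-- Width of a Favard path: the sum of the `x`-components of its steps. -/
def favWidth (ℓ : ℕ) (ω : List (Bool × ℕ)) : ℕ :=
  (endPt (fvec ℓ) (0, 1 - (ℓ : ℤ)) ω).1.toNat

/-- The set of Favard paths of height `n` (the height being the sum of the
`y`-components of the steps). -/
def FavardSet (ℓ : ℕ) (n : ℕ) : Set (List (Bool × ℕ)) :=
  {ω | IsFavard ℓ ω ∧
    (endPt (fvec ℓ) (0, 1 - (ℓ : ℤ)) ω).2 = (n : ℤ) + 1 - (ℓ : ℤ)}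

end Favard

section PathLemmas

variable {σ : Type} {K : Type*}

theorem endPt_append (vec : σ → ℤ × ℤ) (p : ℤ × ℤ) (u v : List σ) :
    endPt vec p (u ++ v) = endPt vec (endPt vec p u) v := by
  induction u generalizing p with
  | nil => rfl
  | cons s rest ih => simp [endPt, ih]

theorem pathWt_append [Field K] (vec : σ → ℤ × ℤ) (w : σ → ℤ × ℤ → K) (p : ℤ × ℤ)
    (u v : List σ) :
    pathWt vec w p (u ++ v) = pathWt vec w p u * pathWt vec w (endPt vec p u) v := by
  induction u generalizing p with
  | nil => simp [pathWt, endPt]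
  | cons s rest ih => simp [pathWt, endPt, ih, mul_assoc]

theorem stepsOK_append (vec : σ → ℤ × ℤ) (ok : σ → ℤ × ℤ → Prop) (p : ℤ × ℤ)
    (u v : List σ) :
    stepsOK vec ok p (u ++ v) ↔ stepsOK vec ok p u ∧ stepsOK vec ok (endPt vec p u) v := by
  induction u generalizing p with
  | nil => simp [stepsOK, endPt]
  | cons s rest ih => simp [stepsOK, endPt, ih, and_assoc]

theorem endPt_fst_eq (vec : σ → ℤ × ℤ) (p : ℤ × ℤ) (ω : List σ) :
    (endPt vec p ω).1 = p.1 + (ω.map (fun s => (vec s).1)).sum := by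
  induction ω generalizing p with
  | nil => simp [endPt]
  | cons s rest ih => simp [endPt, ih]; ring

theorem endPt_snd_eq (vec : σ → ℤ × ℤ) (p : ℤ × ℤ) (ω : List σ) :
    (endPt vec p ω).2 = p.2 + (ω.map (fun s => (vec s).2)).sum := by
  induction ω generalizing p with
  | nil => simp [endPt]
  | cons s rest ih => simp [endPt, ih]; ring

end PathLemmas

section FvecLemmas

theorem fvec_fst_nonneg (ℓ : ℕ) (s : Bool × ℕ) : 0 ≤ (fvec ℓ s).1 := by
  rcases s with ⟨b, i⟩
  cases b <;> simp only [fvec] <;> [skip; positivity]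
  split <;> simp <;> positivity

theorem fvec_snd_nonneg (ℓ : ℕ) (s : Bool × ℕ) : 0 ≤ (fvec ℓ s).2 := by
  rcases s with ⟨b, i⟩
  cases b <;> simp only [fvec] <;> [skip; positivity]
  split <;> simp <;> positivity

theorem fvec_snd_eq (ℓ : ℕ) (s : Bool × ℕ) (hT : s.1 = true → s.2 ≤ ℓ)
    (hF : s.1 = false → s.2 ≤ ℓ + 1) : (fvec ℓ s).2 = (s.2 : ℤ) := by
  rcases s with ⟨b, i⟩
  cases b <;> simp only [fvec]
  · have hF' : i ≤ ℓ + 1 := hF rfl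
    by_cases h : i ≤ ℓ
    · simp [h]
    · have : i = ℓ + 1 := by omega
      simp [h, this]

theorem fvec_snd_pos (ℓ : ℕ) (hℓ : 1 ≤ ℓ) (s : Bool × ℕ) (h1 : 1 ≤ s.2) :
    1 ≤ (fvec ℓ s).2 := by
  rcases s with ⟨b, i⟩
  simp only at h1
  cases b
  · simp only [fvec]
    split
    · simpa using h1
    · simp only
      push_cast
      omega
  · simp only [fvec]
    exact_mod_cast h1

end FvecLemmas
section FavardStruct

/-- Sum of the heights of the steps of a Favard path of height `n` is `n`. -/
theorem favard_height_sum {ℓ n : ℕ} {ω : List (Bool × ℕ)} (hω : ω ∈ FavardSet ℓ n) :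
    (ω.map (fun s => (fvec ℓ s).2)).sum = (n : ℤ) := by
  have h := hω.2
  rw [endPt_snd_eq] at h
  simp only at h
  linarith

theorem favard_false_le {ℓ n j : ℕ} {ω : List (Bool × ℕ)} (hω : ω ∈ FavardSet ℓ n)
    (hj : (false, j) ∈ ω) : ℓ ≤ n := by
  obtain ⟨u, v, rfl⟩ := List.append_of_mem hj
  have hbounds := hω.1.1 (false, j) hj
  have hsum := favard_height_sum hω
  have hok := hω.1.2.2
  rw [stepsOK_append] at hok
  have hokj : 0 ≤ (endPt (fvec ℓ) (0, 1 - (ℓ:ℤ)) u).2 + (j : ℤ) - 1 := by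
    have := hok.2.1
    simpa using this rfl
  rw [endPt_snd_eq] at hokj
  simp only [List.map_append, List.map_cons, List.sum_append, List.sum_cons] at hsum
  have hj2 : (fvec ℓ (false, j)).2 = (j : ℤ) := by
    apply fvec_snd_eq
    · simp
    · simpa using hbounds.2.2
  have hv : 0 ≤ (v.map (fun s => (fvec ℓ s).2)).sum :=
    List.sum_nonneg (by
      intro x hx
      simp only [List.mem_map] at hx
      obtain ⟨s, _, rfl⟩ := hx
      exact fvec_snd_nonneg ℓ s)
  simp only at hokj
  rw [hj2] at hsum
  omega

theorem favard_all_true {ℓ n : ℕ} {ω : List (Bool × ℕ)} (hω : ω ∈ FavardSet ℓ n)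
    (hn : n < ℓ) : ∀ s ∈ ω, s.1 = true := by
  intro s hs
  rcases s with ⟨b, j⟩
  cases b
  · exact absurd (favard_false_le hω hs) (by omega)
  · rfl

theorem favardSet_of_lt (ℓ : ℕ) (hℓ : 1 ≤ ℓ) (n : ℕ) (hn : n < ℓ) :
    FavardSet ℓ n = {if n = 0 then ([] : List (Bool × ℕ)) else [(true, n)]} := by
  ext ω
  simp only [Set.mem_singleton_iff]
  constructor
  · intro hω
    have hsum := favard_height_sum hω
    match ω, hω with
    | [], hω =>
      simp at hsum
      have : n = 0 := by exact_mod_cast hsum.symm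
      simp [this]
    | s :: rest, hω =>
      have hrest : rest = [] := by
        rcases rest with _ | ⟨t, rest'⟩
        · rfl
        · exfalso
          have htmem : t ∈ (s :: t :: rest').tail := by simp
          have htrue : t.1 = true := favard_all_true hω hn t (by simp)
          have htl : t.2 = ℓ := hω.1.2.1 t htmem htrue
          have hts : (fvec ℓ t).2 = (ℓ : ℤ) := by
            rw [fvec_snd_eq ℓ t (fun _ => le_of_eq htl) (by simp [htrue]), htl]
          have hs1 : 1 ≤ s.2 := (hω.1.1 s (by simp)).1
          have hspos : 1 ≤ (fvec ℓ s).2 := fvec_snd_pos ℓ hℓ s hs1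
          have hle : (fvec ℓ t).2 ≤ ((t :: rest').map (fun s => (fvec ℓ s).2)).sum := by
            apply List.single_le_sum
            · intro x hx
              simp only [List.mem_map] at hx
              obtain ⟨u, _, rfl⟩ := hx
              exact fvec_snd_nonneg ℓ u
            · simp
          simp only [List.map_cons, List.sum_cons] at hsum hle
          rw [hts] at hle
          omega
      subst hrest
      have hstrue : s.1 = true := favard_all_true hω hn s (by simp)
      rcases s with ⟨b, j⟩
      simp only at hstrue
      subst hstrue
      simp only [List.map_cons, List.map_nil, List.sum_cons, List.sum_nil, add_zero,
        fvec] at hsum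
      have : j = n := by exact_mod_cast hsum
      subst this
      have : j ≠ 0 := by
        have := (hω.1.1 (true, j) (by simp)).1
        omega
      simp [this]
  · intro hω
    by_cases h0 : n = 0
    · subst h0
      simp only [if_pos rfl] at hω
      subst hω
      refine ⟨⟨?_, ?_, trivial⟩, ?_⟩
      · intro s hs; simp at hs
      · intro s hs; simp at hs
      · simp [endPt]
    · simp only [if_neg h0] at hω
      subst hω
      refine ⟨⟨?_, ?_, ?_⟩, ?_⟩
      · intro s hs
        simp only [List.mem_singleton] at hs
        subst hs
        refine ⟨by omega, fun _ => by omega, fun h => by simp at h⟩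
      · intro s hs; simp at hs
      · refine ⟨fun h => by simp at h, trivial⟩
      · simp only [endPt, fvec]
        simp
        ring
  
end FavardStruct
section FavardBlocks

theorem length_le_sum_of_one_le : ∀ (l : List ℤ), (∀ x ∈ l, 1 ≤ x) → (l.length : ℤ) ≤ l.sum
  | [], _ => by simp
  | x :: t, h => by
    simp only [List.length_cons, List.sum_cons]
    have ht := length_le_sum_of_one_le t (fun y hy => h y (by simp [hy]))
    have hx := h x (by simp)
    push_cast
    omega

theorem favard_length_le {ℓ n : ℕ} (hℓ : 1 ≤ ℓ) {ω : List (Bool × ℕ)}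
    (hω : ω ∈ FavardSet ℓ n) : ω.length ≤ n := by
  have hsum := favard_height_sum hω
  have hlen : ((ω.map (fun s => (fvec ℓ s).2)).length : ℤ) ≤
      (ω.map (fun s => (fvec ℓ s).2)).sum := by
    apply length_le_sum_of_one_le
    intro x hx
    simp only [List.mem_map] at hx
    obtain ⟨s, hs, rfl⟩ := hx
    exact fvec_snd_pos ℓ hℓ s (hω.1.1 s hs).1
  rw [List.length_map, hsum] at hlen
  exact_mod_cast hlen

theorem favardSet_finite (ℓ : ℕ) (hℓ : 1 ≤ ℓ) (n : ℕ) : (FavardSet ℓ n).Finite := by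
  apply Set.Finite.subset (Set.Finite.image
    (List.map (fun s : Bool × Fin (ℓ + 2) => (s.1, (s.2 : ℕ))))
    (List.finite_length_le (Bool × Fin (ℓ + 2)) n))
  intro ω hω
  refine ⟨ω.map (fun s => (s.1, (⟨s.2 % (ℓ + 2), Nat.mod_lt _ (by omega)⟩ : Fin (ℓ + 2)))),
    ?_, ?_⟩
  · simpa using favard_length_le hℓ hω
  · rw [List.map_map]
    conv_rhs => rw [← List.map_id ω]
    apply List.map_congr_left
    intro s hs
    have hb := hω.1.1 s hs
    have : s.2 < ℓ + 2 := by
      rcases s with ⟨b, j⟩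
      cases b
      · have := hb.2.2 rfl; simp only at this ⊢; omega
      · have := hb.2.1 rfl; simp only at this ⊢; omega
    simp only [Function.comp, Fin.val_mk, Nat.mod_eq_of_lt this, id]

/-- Favard paths of height `n` whose last step is `s`. -/
def lastBlock (ℓ n : ℕ) (s : Bool × ℕ) : Set (List (Bool × ℕ)) :=
  {ω ∈ FavardSet ℓ n | ω.getLast? = some s}

theorem endPt_concat {σ : Type} (vec : σ → ℤ × ℤ) (p : ℤ × ℤ) (ξ : List σ) (s : σ) :
    endPt vec p (ξ ++ [s]) = endPt vec p ξ + vec s := by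
  rw [endPt_append]; rfl

theorem lastBlock_empty (ℓ : ℕ) (hℓ : 1 ≤ ℓ) (n : ℕ) (s : Bool × ℕ) (hsn : n < s.2)
    (hsT : s.1 = true → s.2 ≤ ℓ) (hsF : s.1 = false → s.2 ≤ ℓ + 1) :
    lastBlock ℓ n s = ∅ := by
  ext ω
  simp only [lastBlock, Set.mem_setOf_eq, Set.mem_empty_iff_false, iff_false, not_and]
  intro hω hlast
  obtain ⟨ξ, rfl⟩ := List.getLast?_eq_some_iff.1 hlast
  have hsum := favard_height_sum hω
  simp only [List.map_append, List.sum_append, List.map_cons, List.sum_cons, List.map_nil,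
    List.sum_nil, add_zero] at hsum
  have hξ : 0 ≤ (ξ.map (fun s => (fvec ℓ s).2)).sum :=
    List.sum_nonneg (by
      intro x hx
      simp only [List.mem_map] at hx
      obtain ⟨u, _, rfl⟩ := hx
      exact fvec_snd_nonneg ℓ u)
  rw [fvec_snd_eq ℓ s hsT hsF] at hsum
  omega

theorem lastBlock_eq (ℓ : ℕ) (hℓ : 1 ≤ ℓ) (n : ℕ) (hn : ℓ ≤ n) (s : Bool × ℕ)
    (hs1 : 1 ≤ s.2) (hsT : s.1 = true → s.2 = ℓ) (hsF : s.1 = false → s.2 ≤ ℓ + 1)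
    (hsn : s.2 ≤ n) :
    lastBlock ℓ n s = (fun ξ => ξ ++ [s]) '' FavardSet ℓ (n - s.2) := by
  have hsT' : s.1 = true → s.2 ≤ ℓ := fun h => le_of_eq (hsT h)
  have hfs : (fvec ℓ s).2 = (s.2 : ℤ) := fvec_snd_eq ℓ s hsT' hsF
  have hcast : ((n - s.2 : ℕ) : ℤ) = (n : ℤ) - (s.2 : ℤ) := by
    rw [Nat.cast_sub hsn]
  ext ω
  simp only [lastBlock, Set.mem_setOf_eq, Set.mem_image]
  constructor
  · rintro ⟨hω, hlast⟩
    obtain ⟨ξ, rfl⟩ := List.getLast?_eq_some_iff.1 hlast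
    refine ⟨ξ, ⟨⟨?_, ?_, ?_⟩, ?_⟩, rfl⟩
    · intro t ht
      exact hω.1.1 t (by simp [ht])
    · intro t ht
      apply hω.1.2.1 t
      rcases ξ with _ | ⟨a, ξ'⟩
      · simp at ht
      · simp only [List.tail_cons] at ht
        simp [ht]
    · have := hω.1.2.2
      rw [stepsOK_append] at this
      exact this.1
    · have h2 := hω.2
      rw [endPt_concat] at h2
      simp only [Prod.snd_add] at h2
      rw [hfs] at h2
      rw [hcast]
      omega
  · rintro ⟨ξ, hξ, rfl⟩
    have hend2 : (endPt (fvec ℓ) (0, 1 - (ℓ:ℤ)) ξ).2 = ((n - s.2 : ℕ) : ℤ) + 1 - ℓ := hξ.2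
    refine ⟨⟨⟨?_, ?_, ?_⟩, ?_⟩, List.getLast?_concat⟩
    · intro t ht
      rcases List.mem_append.1 ht with h | h
      · exact hξ.1.1 t h
      · simp only [List.mem_singleton] at h
        subst h
        exact ⟨hs1, hsT', hsF⟩
    · intro t ht htt
      rcases ξ with _ | ⟨a, ξ'⟩
      · simp at ht
      · simp only [List.cons_append, List.tail_cons] at ht
        rcases List.mem_append.1 ht with h | h
        · exact hξ.1.2.1 t (by simpa using h) htt
        · simp only [List.mem_singleton] at h
          subst h
          exact hsT htt
    · rw [stepsOK_append]
      refine ⟨hξ.1.2.2, ?_, trivial⟩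
      intro _
      rw [hend2, hcast]
      omega
    · rw [endPt_concat]
      simp only [Prod.snd_add]
      rw [hfs, hend2, hcast]
      ring

end FavardBlocks
section FavardDecomp

/-- Possible last steps of a Favard path of height `≥ ℓ`. -/
def lastT (ℓ : ℕ) : Finset (Bool × ℕ) :=
  insert (true, ℓ) ((Finset.Icc 1 (ℓ + 1)).image (fun i => ((false : Bool), i)))

theorem favardSet_eq_biUnion (ℓ : ℕ) (hℓ : 1 ≤ ℓ) (n : ℕ) (hn : ℓ ≤ n) :
    FavardSet ℓ n = ⋃ s ∈ (lastT ℓ : Set (Bool × ℕ)), lastBlock ℓ n s := by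
  ext ω
  simp only [Set.mem_iUnion, exists_prop, Finset.mem_coe]
  constructor
  · intro hω
    have hne : ω ≠ [] := by
      rintro rfl
      have := favard_height_sum hω
      simp at this
      omega
    obtain ⟨u, t, rfl⟩ : ∃ u t, ω = u ++ [t] :=
      ⟨ω.dropLast, ω.getLast hne, (List.dropLast_append_getLast hne).symm⟩
    refine ⟨t, ?_, hω, List.getLast?_concat⟩
    have hb := hω.1.1 t (by simp)
    rcases t with ⟨b, j⟩
    cases b
    · apply Finset.mem_insert_of_mem
      simp only [Finset.mem_image, Finset.mem_Icc]
      exact ⟨j, ⟨hb.1, hb.2.2 rfl⟩, rfl⟩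
    · have hjℓ : j = ℓ := by
        rcases u with _ | ⟨a, u'⟩
        · -- ω = [(true, j)]
          have hsum := favard_height_sum hω
          simp only [List.nil_append, List.map_cons, List.map_nil, List.sum_cons,
            List.sum_nil, add_zero, fvec] at hsum
          have : j = n := by exact_mod_cast hsum
          have := hb.2.1 rfl
          omega
        · apply hω.1.2.1 (true, j) _ rfl
          simp
      subst hjℓ
      exact Finset.mem_insert_self _ _
  · rintro ⟨s, _, hω, _⟩
    exact hω

theorem lastBlock_disjoint (ℓ n : ℕ) :
    (↑(lastT ℓ) : Set (Bool × ℕ)).PairwiseDisjoint (lastBlock ℓ n) := by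
  intro s _ t _ hst
  rw [Function.onFun, Set.disjoint_left]
  intro ω hω hω'
  exact hst (Option.some_injective _ ((hω.2.symm.trans hω'.2)))

theorem pathWt_concat {σ : Type} {K : Type*} [Field K] (vec : σ → ℤ × ℤ)
    (w : σ → ℤ × ℤ → K) (p : ℤ × ℤ) (ξ : List σ) (s : σ) :
    pathWt vec w p (ξ ++ [s]) = pathWt vec w p ξ * w s (endPt vec p ξ) := by
  rw [pathWt_append]
  simp [pathWt]

theorem endPt_fvec_fst_nonneg (ℓ : ℕ) (ξ : List (Bool × ℕ)) :
    0 ≤ (endPt (fvec ℓ) (0, 1 - (ℓ:ℤ)) ξ).1 := by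
  rw [endPt_fst_eq]
  simp only [zero_add]
  apply List.sum_nonneg
  intro x hx
  simp only [List.mem_map] at hx
  obtain ⟨s, _, rfl⟩ := hx
  exact fvec_fst_nonneg ℓ s

theorem favWidth_concat (ℓ : ℕ) (ξ : List (Bool × ℕ)) (s : Bool × ℕ) :
    favWidth ℓ (ξ ++ [s]) = favWidth ℓ ξ + (fvec ℓ s).1.toNat := by
  unfold favWidth
  rw [endPt_concat]
  simp only [Prod.fst_add]
  have h1 := endPt_fvec_fst_nonneg ℓ ξ
  have h2 := fvec_fst_nonneg ℓ s
  omega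

theorem block_sum {K : Type*} [Field K] (ℓ : ℕ) (hℓ : 1 ≤ ℓ) (a : ℕ → ℕ → K) (n : ℕ)
    (hn : ℓ ≤ n) (s : Bool × ℕ) (hs1 : 1 ≤ s.2) (hsT : s.1 = true → s.2 = ℓ)
    (hsF : s.1 = false → s.2 ≤ ℓ + 1) (hsn : s.2 ≤ n) :
    (∑ᶠ ω ∈ lastBlock ℓ n s,
        Polynomial.C (pathWt (fvec ℓ) (fWt a) (0, 1 - (ℓ : ℤ)) ω) *
          Polynomial.X ^ favWidth ℓ ω) =
      (Polynomial.C (if s.1 = true then 1 else -a s.2 (n - ℓ)) *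
          Polynomial.X ^ (fvec ℓ s).1.toNat) *
        ∑ᶠ ξ ∈ FavardSet ℓ (n - s.2),
          Polynomial.C (pathWt (fvec ℓ) (fWt a) (0, 1 - (ℓ : ℤ)) ξ) *
            Polynomial.X ^ favWidth ℓ ξ := by
  rw [lastBlock_eq ℓ hℓ n hn s hs1 hsT hsF hsn]
  rw [finsum_mem_image (fun ξ _ ξ' _ h => by simpa using List.append_inj_left' h rfl)]
  have hfin := favardSet_finite ℓ hℓ (n - s.2)
  rw [finsum_mem_eq_finite_toFinset_sum _ hfin, finsum_mem_eq_finite_toFinset_sum _ hfin,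
    Finset.mul_sum]
  apply Finset.sum_congr rfl
  intro ξ hξmem
  have hξ : ξ ∈ FavardSet ℓ (n - s.2) := (Set.Finite.mem_toFinset hfin).1 hξmem
  rw [pathWt_concat, favWidth_concat]
  have hw : fWt a s (endPt (fvec ℓ) (0, 1 - (ℓ:ℤ)) ξ) =
      if s.1 = true then 1 else -a s.2 (n - ℓ) := by
    rcases s with ⟨b, j⟩
    cases b
    · simp only [Bool.false_eq_true, if_false, fWt]
      have h2 := hξ.2
      have hc : ((n - j : ℕ) : ℤ) = (n : ℤ) - (j : ℤ) := by
        rw [Nat.cast_sub hsn]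
      have : ((endPt (fvec ℓ) (0, 1 - (ℓ:ℤ)) ξ).2 + (j:ℤ) - 1).toNat = n - ℓ := by
        rw [h2, hc]
        omega
      rw [this]
    · simp [fWt]
  rw [hw, map_mul, pow_add]
  ring

end FavardDecomp

/-- The primitive `ℓ`-LBPs are the generating functions of Favard paths:
`∑_{η ∈ F_n} w(η) x^{width η} = P n`. -/
theorem lbp_eq_favard_generating_function {K : Type*} [Field K]
    (ℓ : ℕ) (hℓ : 1 ≤ ℓ) (a : ℕ → ℕ → K)
    (haℓ : ∀ j : ℕ, a ℓ j ≠ 0) (haℓ1 : ∀ j : ℕ, a (ℓ + 1) j ≠ 0)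
    (P : ℕ → Polynomial K)
    (hinit : ∀ n : ℕ, n < ℓ → P n = Polynomial.X ^ n)
    (hrec : SatisfiesRec ℓ a P) :
    ∀ n : ℕ,
      (∑ᶠ ω ∈ FavardSet ℓ n,
        Polynomial.C (pathWt (fvec ℓ) (fWt a) (0, 1 - (ℓ : ℤ)) ω) *
          Polynomial.X ^ favWidth ℓ ω) = P n := by
  intro n
  induction n using Nat.strong_induction_on with
  | _ n ih =>
  by_cases hlt : n < ℓ
  · rw [favardSet_of_lt ℓ hℓ n hlt, finsum_mem_singleton, hinit n hlt]
    by_cases h0 : n = 0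
    · subst h0
      simp [pathWt, favWidth, endPt]
    · rw [if_neg h0]
      simp [pathWt, fWt, favWidth, endPt, fvec]
  · push_neg at hlt
    obtain ⟨m, rfl⟩ : ∃ m, ℓ = m + 1 := ⟨ℓ - 1, by omega⟩
    set ℓ := m + 1 with hℓdef
    rw [favardSet_eq_biUnion ℓ hℓ n hlt,
      finsum_mem_biUnion (lastBlock_disjoint ℓ n) (Finset.finite_toSet _)
        (fun s _ => (favardSet_finite ℓ hℓ n).subset (fun ω hω => hω.1)),
      finsum_mem_coe_finset]
    have hTnotmem : ((true : Bool), ℓ) ∉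
        (Finset.Icc 1 (ℓ + 1)).image (fun i => ((false : Bool), i)) := by simp
    rw [lastT, Finset.sum_insert hTnotmem,
      Finset.sum_image (fun x _ y _ h => by simpa using h)]
    rw [show ℓ + 1 = (m + 1) + 1 from rfl,
      Finset.sum_Icc_succ_top (by omega : 1 ≤ m + 1 + 1),
      Finset.sum_Icc_succ_top (by omega : 1 ≤ m + 1)]
    -- the χ_ℓ block
    have hχ : (∑ᶠ ω ∈ lastBlock ℓ n (true, ℓ),
          Polynomial.C (pathWt (fvec ℓ) (fWt a) (0, 1 - (ℓ : ℤ)) ω) *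
            Polynomial.X ^ favWidth ℓ ω)
        = Polynomial.X ^ ℓ * P (n - ℓ) := by
      rw [block_sum ℓ hℓ a n hlt (true, ℓ) hℓ (fun _ => rfl) (by simp) hlt,
        ih (n - ℓ) (by omega)]
      simp [fvec]
    -- the α_i blocks, 1 ≤ i ≤ ℓ - 1
    have hsum : (∑ i ∈ Finset.Icc 1 m, ∑ᶠ ω ∈ lastBlock ℓ n (false, i),
            Polynomial.C (pathWt (fvec ℓ) (fWt a) (0, 1 - (ℓ : ℤ)) ω) *
              Polynomial.X ^ favWidth ℓ ω)
        = ∑ i ∈ Finset.Icc 1 m, -(Polynomial.C (a i (n - ℓ)) * P (n - i)) := by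
      apply Finset.sum_congr rfl
      intro i hi
      obtain ⟨hi1, hi2⟩ := Finset.mem_Icc.1 hi
      rw [block_sum ℓ hℓ a n hlt (false, i) hi1 (by simp)
          (fun _ => show i ≤ ℓ + 1 by omega) (show i ≤ n by omega),
        ih (n - i) (by omega)]
      have hiℓ : i ≤ ℓ := by omega
      simp [fvec, hiℓ]
    -- the α_ℓ block
    have hαℓ : (∑ᶠ ω ∈ lastBlock ℓ n (false, m + 1),
          Polynomial.C (pathWt (fvec ℓ) (fWt a) (0, 1 - (ℓ : ℤ)) ω) *
            Polynomial.X ^ favWidth ℓ ω)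
        = -(Polynomial.C (a ℓ (n - ℓ)) * P (n - ℓ)) := by
      rw [block_sum ℓ hℓ a n hlt (false, m + 1) (by omega) (by simp)
          (fun _ => show m + 1 ≤ ℓ + 1 by omega) (show m + 1 ≤ n from hlt),
        ih (n - (m + 1)) (by omega)]
      simp [fvec, hℓdef]
    rw [hχ, hsum, hαℓ, Finset.sum_neg_distrib]
    have hIcc : Finset.Icc 1 (ℓ - 1) = Finset.Icc 1 m := by rw [hℓdef]; norm_num
    by_cases hnℓ : n = ℓ
    · rw [show lastBlock ℓ n (false, m + 1 + 1) = ∅ from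
        lastBlock_empty ℓ hℓ n (false, m + 1 + 1) (by omega) (by simp) (fun _ => show m + 1 + 1 ≤ ℓ + 1 by omega),
        finsum_mem_empty]
      rw [hrec n hlt, if_pos hnℓ, hIcc]
      ring
    · have hn1 : ℓ + 1 ≤ n := by omega
      have hαℓ1 : (∑ᶠ ω ∈ lastBlock ℓ n (false, m + 1 + 1),
            Polynomial.C (pathWt (fvec ℓ) (fWt a) (0, 1 - (ℓ : ℤ)) ω) *
              Polynomial.X ^ favWidth ℓ ω)
          = -(Polynomial.C (a (ℓ + 1) (n - ℓ)) * Polynomial.X ^ ℓ * P (n - ℓ - 1)) := by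
        rw [block_sum ℓ hℓ a n hlt (false, m + 1 + 1) (by omega) (by simp)
            (fun _ => show m + 1 + 1 ≤ ℓ + 1 by omega) (show m + 1 + 1 ≤ n from hn1),
          show n - (false, m + 1 + 1).2 = n - ℓ - 1 by simp; omega,
          ih (n - ℓ - 1) (by omega)]
        have h2 : ¬ (m + 1 + 1 ≤ ℓ) := by omega
        simp [fvec, h2, hℓdef]
      rw [hαℓ1, hrec n hlt, if_neg hnℓ, hIcc]
      ring
end

section
/- General orthogonality: Let 𝓛 : K[x,x⁻¹] → K be the linear functional defined by the combinatorial moments μ_n, and let (P_n) be the primitive sequence defined by the (ℓ+2)-term recurrence with P_n(x) = x^n for 0 ≤ n ≤ ℓ−1. Then for every n ≥ 0 and k ∈ ℤ: (a) if n ≤ k, then 𝓛[P_n(x)x^{−ℓk}] = (−1)^n·∑ w(ω), the sum over all dual ℓ-Schröder paths ω from (0,n) to (ℓk−n, 0); (b) if 0 ≤ k ≤ n−1, then 𝓛[P_n(x)x^{−ℓk}] = 0; (c) if k < 0, then 𝓛[P_n(x)x^{−ℓk}] = a_{ℓ,0}·∑ w(ω), the sum over all ℓ-Schröder paths ω from (0,n)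 to (n−ℓ(k+1), 0). -/
open scoped BigOperators

section Schroder

variable {K : Type*} [Field K]

/-- Steps of `ℓ`-Schröder paths: `a_i = (i, ℓ - i)` for `0 ≤ i ≤ ℓ` and
`a_{ℓ+1} = (1, -1)`. -/
def svec (ℓ : ℕ) (i : ℕ) : ℤ × ℤ :=
  if i ≤ ℓ then ((i : ℤ), (ℓ : ℤ) - i) else (1, -1)

/-- `ω` (a list of step indices `≤ ℓ+1`) is an `ℓ`-Schröder path from `p`:
it never goes below the `x`-axis. -/
def IsSchroder (ℓ : ℕ) (p : ℤ × ℤ) (ω : List ℕ) : Prop :=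
  (∀ s ∈ ω, s ≤ ℓ + 1) ∧ ∀ q ∈ verts (svec ℓ) p ω, 0 ≤ q.2

/-- Weight of an `ℓ`-Schröder step: `a_0` has weight `1`, and `a_i`
(`1 ≤ i ≤ ℓ+1`) starting at `y`-coordinate `t` has weight `a i t`. -/
def aWt (a : ℕ → ℕ → K) (s : ℕ) (q : ℤ × ℤ) : K :=
  if s = 0 then 1 else a s q.2.toNat

/-- `B n`: the set of `ℓ`-Schröder paths from `(0, n mod ℓ)` to `(n, 0)`. -/
def BSet (ℓ : ℕ) (n : ℤ) : Set (List ℕ) :=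
  {ω | IsSchroder ℓ (0, n % (ℓ : ℤ)) ω ∧
    endPt (svec ℓ) (0, n % (ℓ : ℤ)) ω = (n, 0)}

/-- `w(B n)`: generating function of `B n`. -/
noncomputable def wB (ℓ : ℕ) (a : ℕ → ℕ → K) (n : ℤ) : K :=
  ∑ᶠ ω ∈ BSet ℓ n, pathWt (svec ℓ) (aWt a) (0, n % (ℓ : ℤ)) ω

/-- Steps of dual `ℓ`-Schröder paths: `A_i = (ℓ-i, ℓ-i)` for `0 ≤ i ≤ ℓ-1`,
`A_ℓ = (ℓ, 0)` and `A_{ℓ+1} = (ℓ-1, -1)`. -/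
def dvec (ℓ : ℕ) (i : ℕ) : ℤ × ℤ :=
  if i < ℓ then ((ℓ : ℤ) - i, (ℓ : ℤ) - i)
  else if i = ℓ then ((ℓ : ℤ), 0) else ((ℓ : ℤ) - 1, -1)

/-- `ω` is a dual `ℓ`-Schröder path from `p`. -/
def IsDualSchroder (ℓ : ℕ) (p : ℤ × ℤ) (ω : List ℕ) : Prop :=
  (∀ s ∈ ω, s ≤ ℓ + 1) ∧ ∀ q ∈ verts (dvec ℓ) p ω, 0 ≤ q.2

/-- Weight of a dual `ℓ`-Schröder step starting at `y`-coordinate `t`: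
`(-1)^{ℓ+1} / a ℓ t` for `A_0`, `(-1)^{ℓ+1+i} a i t / a ℓ t` for
`1 ≤ i ≤ ℓ-1` or `i = ℓ+1`, and `1 / a ℓ t` for `A_ℓ`. -/
def dWt (ℓ : ℕ) (a : ℕ → ℕ → K) (s : ℕ) (q : ℤ × ℤ) : K :=
  if s = 0 then (-1 : K) ^ (ℓ + 1) / a ℓ q.2.toNat
  else if s = ℓ then 1 / a ℓ q.2.toNat
  else (-1 : K) ^ (ℓ + 1 + s) * a s q.2.toNat / a ℓ q.2.toNat

/-- `B̃ n`: the set of dual `ℓ`-Schröder paths from `(0, (-n) mod ℓ)`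
to `(n, 0)`. -/
def DSet (ℓ : ℕ) (n : ℤ) : Set (List ℕ) :=
  {ω | IsDualSchroder ℓ (0, (-n) % (ℓ : ℤ)) ω ∧
    endPt (dvec ℓ) (0, (-n) % (ℓ : ℤ)) ω = (n, 0)}

/-- `w(B̃ n)`: generating function of `B̃ n`. -/
noncomputable def wD (ℓ : ℕ) (a : ℕ → ℕ → K) (n : ℤ) : K :=
  ∑ᶠ ω ∈ DSet ℓ n, pathWt (dvec ℓ) (dWt ℓ a) (0, (-n) % (ℓ : ℤ)) ω

/-- The combinatorial moments: `μ n = a ℓ 0 · w(B_{n-ℓ})` for `n ≥ ℓ`,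
`μ n = 0` for `1 ≤ n ≤ ℓ-1`, and `μ n = (-1)^{n mod ℓ} · w(B̃_{-n})`
for `n ≤ 0`. -/
noncomputable def combMoment (ℓ : ℕ) (a : ℕ → ℕ → K) (n : ℤ) : K :=
  if (ℓ : ℤ) ≤ n then a ℓ 0 * wB ℓ a (n - ℓ)
  else if 1 ≤ n then 0
  else (-1 : K) ^ (n % (ℓ : ℤ)).toNat * wD ℓ a (-n)

end Schroder

section Generic

variable {K : Type*} [Field K]

/-- validity of a path from `p` to `q` with steps bounded by `ℓ+1`, staying weakly above axis -/
def ValidP (vec : ℕ → ℤ × ℤ) (ℓ : ℕ) (p q : ℤ × ℤ) (ω : List ℕ) : Prop :=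
  (∀ s ∈ ω, s ≤ ℓ + 1) ∧ (∀ r ∈ verts vec p ω, 0 ≤ r.2) ∧ endPt vec p ω = q

noncomputable def pSum (vec : ℕ → ℤ × ℤ) (w : ℕ → ℤ × ℤ → K) (ℓ : ℕ) (p q : ℤ × ℤ) : K :=
  ∑ᶠ ω ∈ {ω : List ℕ | ValidP vec ℓ p q ω}, pathWt vec w p ω

variable {vec : ℕ → ℤ × ℤ} {ℓ : ℕ} {p q : ℤ × ℤ}

lemma validP_nil : ValidP vec ℓ p q [] ↔ p = q ∧ 0 ≤ p.2 := by
  simp [ValidP, verts, endPt, and_comm]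

lemma validP_cons {s : ℕ} {ω : List ℕ} :
    ValidP vec ℓ p q (s :: ω) ↔ s ≤ ℓ + 1 ∧ 0 ≤ p.2 ∧ ValidP vec ℓ (p + vec s) q ω := by
  simp only [ValidP, verts, endPt, List.forall_mem_cons, List.mem_cons]
  constructor
  · rintro ⟨h1, h3, h4⟩
    exact ⟨h1 s (Or.inl rfl), h3 p (Or.inl rfl),
      ⟨fun r hr => h1 r (Or.inr hr), fun r hr => h3 r (Or.inr hr), h4⟩⟩
  · rintro ⟨h1, h2, h3, h4, h5⟩
    exact ⟨fun r hr => hr.elim (fun e => e ▸ h1) (h3 r),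
      fun r hr => hr.elim (fun e => e ▸ h2) (h4 r), h5⟩

lemma validP_start_nonneg {ω : List ℕ} (h : ValidP vec ℓ p q ω) : 0 ≤ p.2 := by
  cases ω with
  | nil => exact (validP_nil.1 h).2
  | cons s ω => exact (validP_cons.1 h).2.1

lemma pSum_eq_zero_of_neg (w : ℕ → ℤ × ℤ → K) (h : p.2 < 0) : pSum vec w ℓ p q = 0 := by
  have : {ω : List ℕ | ValidP vec ℓ p q ω} = ∅ := by
    ext ω; simp only [Set.mem_setOf_eq, Set.mem_empty_iff_false, iff_false]
    intro hv; exact absurd (validP_start_nonneg hv) (by omega)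
  rw [pSum, this, finsum_mem_empty]

/-- monotone invariant -/
lemma validP_mono (α β : ℤ) (hstep : ∀ s, s ≤ ℓ + 1 → 0 ≤ α * (vec s).1 + β * (vec s).2)
    {ω : List ℕ} (h : ValidP vec ℓ p q ω) :
    α * p.1 + β * p.2 ≤ α * q.1 + β * q.2 := by
  induction ω generalizing p with
  | nil => obtain ⟨rfl, -⟩ := validP_nil.1 h; exact le_refl _
  | cons s ω ih =>
    obtain ⟨h1, h2, h3⟩ := validP_cons.1 h
    have := ih h3
    have hs := hstep s h1
    simp only [Prod.fst_add, Prod.snd_add] at this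
    nlinarith [this, hs]

lemma pSum_eq_zero_mono (w : ℕ → ℤ × ℤ → K) (α β : ℤ)
    (hstep : ∀ s, s ≤ ℓ + 1 → 0 ≤ α * (vec s).1 + β * (vec s).2)
    (h : α * q.1 + β * q.2 < α * p.1 + β * p.2) : pSum vec w ℓ p q = 0 := by
  have : {ω : List ℕ | ValidP vec ℓ p q ω} = ∅ := by
    ext ω; simp only [Set.mem_setOf_eq, Set.mem_empty_iff_false, iff_false]
    intro hv; exact absurd (validP_mono α β hstep hv) (by omega)
  rw [pSum, this, finsum_mem_empty]

lemma validP_length (α β : ℤ) (hstep : ∀ s, s ≤ ℓ + 1 → 1 ≤ α * (vec s).1 + β * (vec s).2)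
    {ω : List ℕ} (h : ValidP vec ℓ p q ω) :
    (ω.length : ℤ) ≤ α * (q.1 - p.1) + β * (q.2 - p.2) := by
  induction ω generalizing p with
  | nil => obtain ⟨rfl, -⟩ := validP_nil.1 h; simp
  | cons s ω ih =>
    obtain ⟨h1, h2, h3⟩ := validP_cons.1 h
    have := ih h3
    have hs := hstep s h1
    simp only [Prod.fst_add, Prod.snd_add, List.length_cons] at this ⊢
    push_cast
    nlinarith [this, hs]

lemma validP_finite (α β : ℤ) (hstep : ∀ s, s ≤ ℓ + 1 → 1 ≤ α * (vec s).1 + β * (vec s).2) :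
    {ω : List ℕ | ValidP vec ℓ p q ω}.Finite := by
  set N := (α * (q.1 - p.1) + β * (q.2 - p.2)).toNat with hN
  have : {ω : List ℕ | ValidP vec ℓ p q ω} ⊆
      (List.map (Fin.val : Fin (ℓ + 2) → ℕ)) ''
        {l : List (Fin (ℓ + 2)) | l.length ≤ N} := by
    intro ω hω
    have hlen : (ω.length : ℤ) ≤ α * (q.1 - p.1) + β * (q.2 - p.2) := validP_length α β hstep hω
    have hmem : ∀ s ∈ ω, s ≤ ℓ + 1 := hω.1
    refine ⟨ω.map (fun s => (⟨min s (ℓ + 1), by omega⟩ : Fin (ℓ + 2))), ?_, ?_⟩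
    · simp only [Set.mem_setOf_eq, List.length_map]
      omega
    · rw [List.map_map]
      conv_rhs => rw [← List.map_id ω]
      refine List.map_congr_left (fun s hs => ?_)
      have := hmem s hs
      simp only [Function.comp_apply, id_eq]
      omega
  exact Set.Finite.subset ((List.finite_length_le _ N).image _) this

end Generic

section Generic2

variable {K : Type*} [Field K] {vec : ℕ → ℤ × ℤ} {w : ℕ → ℤ × ℤ → K} {ℓ : ℕ} {p q : ℤ × ℤ}

lemma pSum_decomp (α β : ℤ)
    (hstep : ∀ s, s ≤ ℓ + 1 → 1 ≤ α * (vec s).1 + β * (vec s).2) (hp : 0 ≤ p.2) :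
    pSum vec w ℓ p q = (if p = q then 1 else 0) +
      ∑ s ∈ Finset.range (ℓ + 2), w s p * pSum vec w ℓ (p + vec s) q := by
  classical
  have hsplit : {ω : List ℕ | ValidP vec ℓ p q ω} =
      (if p = q then {([] : List ℕ)} else ∅) ∪
      ⋃ s ∈ (Finset.range (ℓ + 2) : Set ℕ),
        (List.cons s) '' {ω | ValidP vec ℓ (p + vec s) q ω} := by
    ext ω
    cases ω with
    | nil =>
      by_cases hpq : p = q
      · subst hpq; simp [validP_nil, hp]
      · simp [validP_nil, hpq]
    | cons s ω =>
      by_cases hpq : p = q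
      · subst hpq; simp [validP_cons, Nat.lt_succ_iff, hp]; tauto
      · simp [validP_cons, Nat.lt_succ_iff, hpq, hp]; tauto
  have hfin : ∀ s : ℕ, {ω | ValidP vec ℓ (p + vec s) q ω}.Finite :=
    fun s => validP_finite α β hstep
  have hfin2 : (⋃ s ∈ (Finset.range (ℓ + 2) : Set ℕ),
      (List.cons s) '' {ω | ValidP vec ℓ (p + vec s) q ω}).Finite :=
    Set.Finite.biUnion (Finset.finite_toSet _) (fun s _ => (hfin s).image _)
  have hdisj : Disjoint (if p = q then {([] : List ℕ)} else ∅)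
      (⋃ s ∈ (Finset.range (ℓ + 2) : Set ℕ),
        (List.cons s) '' {ω | ValidP vec ℓ (p + vec s) q ω}) := by
    rw [Set.disjoint_left]
    intro ω hω h2
    have hnil : ω = [] := by
      split at hω
      · exact hω
      · exact absurd hω (Set.notMem_empty ω)
    subst hnil
    simp only [Set.mem_iUnion, Set.mem_image] at h2
    obtain ⟨s, -, ω', -, h⟩ := h2
    exact List.cons_ne_nil _ _ h
  have hpair : (↑(Finset.range (ℓ + 2)) : Set ℕ).PairwiseDisjoint
      (fun s => (List.cons s) '' {ω | ValidP vec ℓ (p + vec s) q ω}) := by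
    intro s _ t _ hst
    rw [Function.onFun, Set.disjoint_left]
    rintro ω ⟨ω1, -, rfl⟩ ⟨ω2, -, h⟩
    exact hst (List.head_eq_of_cons_eq h.symm ▸ rfl)
  rw [pSum, hsplit, finsum_mem_union hdisj (by split <;> simp) hfin2]
  congr 1
  · by_cases hpq : p = q <;> simp [hpq, pathWt]
  · rw [finsum_mem_biUnion hpair (Finset.finite_toSet _) (fun s _ => (hfin s).image _),
      finsum_mem_coe_finset]
    refine Finset.sum_congr rfl (fun s _ => ?_)
    rw [finsum_mem_image (fun a _ b _ h => by injection h), pSum,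
      finsum_mem_eq_finite_toFinset_sum _ (hfin s),
      finsum_mem_eq_finite_toFinset_sum _ (hfin s), Finset.mul_sum]
    exact Finset.sum_congr rfl (fun ω _ => rfl)

lemma validP_shift (d : ℤ) {ω : List ℕ} :
    ValidP vec ℓ (p.1 + d, p.2) (q.1 + d, q.2) ω ↔ ValidP vec ℓ p q ω := by
  induction ω generalizing p with
  | nil =>
    simp only [validP_nil, Prod.ext_iff]
    constructor
    · rintro ⟨⟨h1, h2⟩, h3⟩; exact ⟨⟨by omega, h2⟩, h3⟩
    · rintro ⟨⟨h1, h2⟩, h3⟩; exact ⟨⟨by omega, h2⟩, h3⟩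
  | cons s ω ih =>
    have hpt : (p.1 + d, p.2) + vec s = ((p + vec s).1 + d, (p + vec s).2) := by
      ext <;> simp <;> ring
    rw [validP_cons, validP_cons, hpt]
    constructor
    · rintro ⟨h1, h2, h3⟩; exact ⟨h1, h2, (ih (p := p + vec s)).1 h3⟩
    · rintro ⟨h1, h2, h3⟩; exact ⟨h1, h2, (ih (p := p + vec s)).2 h3⟩

lemma pathWt_shift (hw : ∀ (s : ℕ) (x y d : ℤ), w s (x + d, y) = w s (x, y))
    (d : ℤ) {ω : List ℕ} :
    pathWt vec w (p.1 + d, p.2) ω = pathWt vec w p ω := by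
  induction ω generalizing p with
  | nil => rfl
  | cons s ω ih =>
    have hpt : (p.1 + d, p.2) + vec s = ((p + vec s).1 + d, (p + vec s).2) := by
      ext <;> simp <;> ring
    show w s (p.1 + d, p.2) * pathWt vec w ((p.1 + d, p.2) + vec s) ω = _
    rw [hpt, ih (p := p + vec s), hw]
    rfl

lemma pSum_shift (hw : ∀ (s : ℕ) (x y d : ℤ), w s (x + d, y) = w s (x, y)) (d : ℤ) :
    pSum vec w ℓ (p.1 + d, p.2) (q.1 + d, q.2) = pSum vec w ℓ p q := by
  rw [pSum, pSum]
  have hset : {ω : List ℕ | ValidP vec ℓ (p.1 + d, p.2) (q.1 + d, q.2) ω} =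
      {ω | ValidP vec ℓ p q ω} := Set.ext (fun ω => validP_shift d)
  rw [hset]
  exact finsum_mem_congr rfl (fun ω _ => pathWt_shift hw d)

end Generic2



section Spec

variable {K : Type*} [Field K] (ℓ : ℕ) (a : ℕ → ℕ → K)

noncomputable def SS (p q : ℤ × ℤ) : K := pSum (svec ℓ) (aWt a) ℓ p q

noncomputable def DD (p q : ℤ × ℤ) : K := pSum (dvec ℓ) (dWt ℓ a) ℓ p q

variable {ℓ}

lemma svec_phi (hℓ : 1 ≤ ℓ) : ∀ s, s ≤ ℓ + 1 → 1 ≤ 2 * (svec ℓ s).1 + 1 * (svec ℓ s).2 := by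
  intro s hs
  by_cases h : s ≤ ℓ <;> simp [svec, h] <;> omega

lemma dvec_phi (hℓ : 1 ≤ ℓ) : ∀ s, s ≤ ℓ + 1 → 1 ≤ 2 * (dvec ℓ s).1 + (-1) * (dvec ℓ s).2 := by
  intro s hs
  rcases lt_trichotomy s ℓ with h | h | h
  · simp [dvec, h]; omega
  · simp [dvec, h]; omega
  · have h1 : ¬ s < ℓ := by omega
    have h2 : s ≠ ℓ := by omega
    simp [dvec, h1, h2]; omega

lemma svec_mono : ∀ s, s ≤ ℓ + 1 → 0 ≤ 1 * (svec ℓ s).1 + 1 * (svec ℓ s).2 := by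
  intro s hs
  by_cases h : s ≤ ℓ <;> simp [svec, h] <;> omega

lemma dvec_mono : ∀ s, s ≤ ℓ + 1 → 0 ≤ 1 * (dvec ℓ s).1 + ((ℓ : ℤ) - 1) * (dvec ℓ s).2 := by
  intro s hs
  rcases lt_trichotomy s ℓ with h | h | h
  · simp only [dvec, if_pos h]
    have h1 : (0:ℤ) ≤ (ℓ : ℤ) - s := by omega
    have h2 : (0:ℤ) ≤ (ℓ : ℤ) := by omega
    nlinarith
  · simp [dvec, h]
    try omega
  · have h1 : ¬ s < ℓ := by omega
    have h2 : s ≠ ℓ := by omega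
    simp [dvec, h1, h2]
    try omega

lemma aWt_shift : ∀ (s : ℕ) (x y d : ℤ), aWt a s (x + d, y) = aWt a s (x, y) := by
  intro s x y d; simp [aWt]

lemma dWt_shift : ∀ (s : ℕ) (x y d : ℤ), dWt ℓ a s (x + d, y) = dWt ℓ a s (x, y) := by
  intro s x y d; simp [dWt]

variable {a}

/-- vanishing: Schröder paths -/
lemma SS_zero {p q : ℤ × ℤ} (h : q.1 + q.2 < p.1 + p.2) : SS ℓ a p q = 0 := by
  refine pSum_eq_zero_mono _ 1 1 svec_mono (by omega)

/-- vanishing: dual paths -/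
lemma DD_zero {p q : ℤ × ℤ} (h : q.1 + ((ℓ:ℤ) - 1) * q.2 < p.1 + ((ℓ:ℤ) - 1) * p.2) :
    DD ℓ a p q = 0 := by
  refine pSum_eq_zero_mono _ 1 ((ℓ:ℤ) - 1) dvec_mono (by omega)

lemma SS_zero_neg {p q : ℤ × ℤ} (h : p.2 < 0) : SS ℓ a p q = 0 :=
  pSum_eq_zero_of_neg _ h

lemma DD_zero_neg {p q : ℤ × ℤ} (h : p.2 < 0) : DD ℓ a p q = 0 :=
  pSum_eq_zero_of_neg _ h

lemma SS_translate (y x z d : ℤ) : SS ℓ a (d, y) (x + d, z) = SS ℓ a (0, y) (x, z) := by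
  have := pSum_shift (vec := svec ℓ) (w := aWt a) (ℓ := ℓ) (p := ((0:ℤ), y)) (q := (x, z))
    (aWt_shift a) d
  simpa [SS] using this

lemma DD_translate (y x z d : ℤ) : DD ℓ a (d, y) (x + d, z) = DD ℓ a (0, y) (x, z) := by
  have := pSum_shift (vec := dvec ℓ) (w := dWt ℓ a) (ℓ := ℓ) (p := ((0:ℤ), y)) (q := (x, z))
    (dWt_shift a) d
  simpa [DD] using this

end Spec

section Decomp

variable {K : Type*} [Field K] {ℓ : ℕ} {a : ℕ → ℕ → K}

lemma range_split (n : ℕ) (hn : 1 ≤ n) (f : ℕ → K) :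
    ∑ s ∈ Finset.range n, f s = f 0 + ∑ i ∈ Finset.Icc 1 (n - 1), f i := by
  have h1 : n - 1 + 1 = n := by omega
  have h2 : ∑ i ∈ Finset.Icc 1 (n - 1), f i = ∑ i ∈ Finset.range (n - 1), f (1 + i) := by
    rw [← Finset.Ico_add_one_right_eq_Icc, h1, Finset.sum_Ico_eq_sum_range]
  rw [h2]
  calc ∑ s ∈ Finset.range n, f s = ∑ s ∈ Finset.range (n - 1 + 1), f s := by rw [h1]
    _ = (∑ i ∈ Finset.range (n - 1), f (i + 1)) + f 0 := Finset.sum_range_succ' f (n - 1)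
    _ = f 0 + ∑ i ∈ Finset.range (n - 1), f (1 + i) := by
        rw [add_comm]; congr 1; exact Finset.sum_congr rfl (fun i _ => by rw [add_comm])

lemma range_split2 (n : ℕ) (hn : 1 ≤ n) (f : ℕ → K) :
    ∑ s ∈ Finset.range (n + 2), f s =
      f 0 + (∑ i ∈ Finset.Icc 1 (n - 1), f i) + f n + f (n + 1) := by
  rw [Finset.sum_range_succ, Finset.sum_range_succ, range_split n hn]

lemma SS_translate' (y z x d : ℤ) : SS ℓ a (d, y) (x, z) = SS ℓ a (0, y) (x - d, z) := by
  rw [← SS_translate y (x - d) z d, sub_add_cancel]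

lemma DD_translate' (y z x d : ℤ) : DD ℓ a (d, y) (x, z) = DD ℓ a (0, y) (x - d, z) := by
  rw [← DD_translate y (x - d) z d, sub_add_cancel]

lemma prod_add_fst (x y u v : ℤ) : ((x, y) + (u, v) : ℤ × ℤ) = (x + u, y + v) := rfl

lemma SS_decomp (hℓ : 1 ≤ ℓ) (y E : ℤ) (hy : 0 ≤ y) :
    SS ℓ a (0, y) (E, 0) =
      (if y = 0 ∧ E = 0 then 1 else 0)
      + SS ℓ a (0, y + ℓ) (E, 0)
      + (∑ i ∈ Finset.Icc 1 (ℓ - 1), a i y.toNat * SS ℓ a (0, y + ℓ - i) (E - i, 0))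
      + a ℓ y.toNat * SS ℓ a (0, y) (E - ℓ, 0)
      + a (ℓ + 1) y.toNat * SS ℓ a (0, y - 1) (E - 1, 0) := by
  have h0 := pSum_decomp (vec := svec ℓ) (w := aWt a) (ℓ := ℓ) (p := ((0:ℤ), y)) (q := (E, 0))
    2 1 (svec_phi hℓ) hy
  have hδ : (((0:ℤ), y) = ((E:ℤ), (0:ℤ))) ↔ (y = 0 ∧ E = 0) := by
    rw [Prod.mk.injEq]
    constructor
    · rintro ⟨h1, h2⟩; exact ⟨h2, h1.symm⟩
    · rintro ⟨h1, h2⟩; exact ⟨h2.symm, h1⟩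
  rw [SS, h0, if_congr hδ rfl rfl, range_split2 ℓ hℓ]
  have e0 : aWt a 0 ((0:ℤ), y) * pSum (svec ℓ) (aWt a) ℓ (((0:ℤ), y) + svec ℓ 0) (E, 0)
      = SS ℓ a (0, y + ℓ) (E, 0) := by
    have hv : svec ℓ 0 = ((0:ℤ), (ℓ:ℤ)) := by simp [svec]
    rw [hv, prod_add_fst, add_zero]
    simp [aWt, SS]
  have eℓ : aWt a ℓ ((0:ℤ), y) * pSum (svec ℓ) (aWt a) ℓ (((0:ℤ), y) + svec ℓ ℓ) (E, 0)
      = a ℓ y.toNat * SS ℓ a (0, y) (E - ℓ, 0) := by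
    have hv : svec ℓ ℓ = ((ℓ:ℤ), (0:ℤ)) := by simp [svec]
    rw [hv, prod_add_fst, zero_add, add_zero]
    rw [show pSum (svec ℓ) (aWt a) ℓ ((ℓ:ℤ), y) (E, 0) = SS ℓ a ((ℓ:ℤ), y) (E, 0) from rfl,
      SS_translate']
    have : aWt a ℓ ((0:ℤ), y) = a ℓ y.toNat := by simp [aWt]; omega
    rw [this]
  have etop : aWt a (ℓ + 1) ((0:ℤ), y) * pSum (svec ℓ) (aWt a) ℓ (((0:ℤ), y) + svec ℓ (ℓ + 1)) (E, 0)
      = a (ℓ + 1) y.toNat * SS ℓ a (0, y - 1) (E - 1, 0) := by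
    have hv : svec ℓ (ℓ + 1) = ((1:ℤ), (-1:ℤ)) := by simp [svec]
    rw [hv, prod_add_fst, zero_add]
    rw [show pSum (svec ℓ) (aWt a) ℓ ((1:ℤ), y + -1) (E, 0) = SS ℓ a ((1:ℤ), y - 1) (E, 0) by
      rw [SS]; ring_nf, SS_translate']
    have : aWt a (ℓ + 1) ((0:ℤ), y) = a (ℓ + 1) y.toNat := by simp [aWt]
    rw [this]
  have emid : ∀ i ∈ Finset.Icc 1 (ℓ - 1),
      aWt a i ((0:ℤ), y) * pSum (svec ℓ) (aWt a) ℓ (((0:ℤ), y) + svec ℓ i) (E, 0)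
      = a i y.toNat * SS ℓ a (0, y + ℓ - i) (E - i, 0) := by
    intro i hi
    simp only [Finset.mem_Icc] at hi
    have hv : svec ℓ i = ((i:ℤ), (ℓ:ℤ) - i) := by simp [svec]; omega
    rw [hv, prod_add_fst, zero_add]
    rw [show pSum (svec ℓ) (aWt a) ℓ ((i:ℤ), y + ((ℓ:ℤ) - i)) (E, 0)
        = SS ℓ a ((i:ℤ), y + (ℓ:ℤ) - i) (E, 0) by rw [SS]; ring_nf, SS_translate']
    have : aWt a i ((0:ℤ), y) = a i y.toNat := by simp [aWt]; omega
    rw [this]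
  rw [e0, eℓ, etop, Finset.sum_congr rfl emid]
  ring

end Decomp

section DecompD

variable {K : Type*} [Field K] {ℓ : ℕ} {a : ℕ → ℕ → K}

lemma DD_decomp (hℓ : 1 ≤ ℓ) (haℓ : ∀ j : ℕ, a ℓ j ≠ 0) (y E : ℤ) (hy : 0 ≤ y) :
    a ℓ y.toNat * DD ℓ a (0, y) (E, 0) =
      a ℓ y.toNat * (if y = 0 ∧ E = 0 then 1 else 0)
      + (-1 : K) ^ (ℓ + 1) * DD ℓ a (0, y + ℓ) (E - ℓ, 0)
      + (-1 : K) ^ (ℓ + 1) * (∑ i ∈ Finset.Icc 1 (ℓ - 1),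
          (-1 : K) ^ i * a i y.toNat * DD ℓ a (0, y + ℓ - i) (E - ℓ + i, 0))
      + DD ℓ a (0, y) (E - ℓ, 0)
      + a (ℓ + 1) y.toNat * DD ℓ a (0, y - 1) (E - ℓ + 1, 0) := by
  have hne : a ℓ y.toNat ≠ 0 := haℓ y.toNat
  have h0 := pSum_decomp (vec := dvec ℓ) (w := dWt ℓ a) (ℓ := ℓ) (p := ((0:ℤ), y)) (q := (E, 0))
    2 (-1) (dvec_phi hℓ) hy
  have hδ : (((0:ℤ), y) = ((E:ℤ), (0:ℤ))) ↔ (y = 0 ∧ E = 0) := by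
    rw [Prod.mk.injEq]
    constructor
    · rintro ⟨h1, h2⟩; exact ⟨h2, h1.symm⟩
    · rintro ⟨h1, h2⟩; exact ⟨h2.symm, h1⟩
  rw [DD, h0, if_congr hδ rfl rfl, range_split2 ℓ hℓ]
  have e0 : dWt ℓ a 0 ((0:ℤ), y) * pSum (dvec ℓ) (dWt ℓ a) ℓ (((0:ℤ), y) + dvec ℓ 0) (E, 0)
      = (a ℓ y.toNat)⁻¹ * ((-1 : K) ^ (ℓ + 1) * DD ℓ a (0, y + ℓ) (E - ℓ, 0)) := by
    have hv : dvec ℓ 0 = ((ℓ:ℤ), (ℓ:ℤ)) := by simp [dvec, hℓ]; omega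
    rw [hv, prod_add_fst, zero_add]
    rw [show pSum (dvec ℓ) (dWt ℓ a) ℓ ((ℓ:ℤ), y + ℓ) (E, 0) = DD ℓ a ((ℓ:ℤ), y + ℓ) (E, 0)
      from rfl, DD_translate']
    have hw : dWt ℓ a 0 ((0:ℤ), y) = (-1 : K) ^ (ℓ + 1) / a ℓ y.toNat := by
      unfold dWt; rw [if_pos rfl]
    rw [hw]
    ring
  have eℓ : dWt ℓ a ℓ ((0:ℤ), y) * pSum (dvec ℓ) (dWt ℓ a) ℓ (((0:ℤ), y) + dvec ℓ ℓ) (E, 0)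
      = (a ℓ y.toNat)⁻¹ * DD ℓ a (0, y) (E - ℓ, 0) := by
    have hv : dvec ℓ ℓ = ((ℓ:ℤ), (0:ℤ)) := by simp [dvec]
    rw [hv, prod_add_fst, zero_add, add_zero]
    rw [show pSum (dvec ℓ) (dWt ℓ a) ℓ ((ℓ:ℤ), y) (E, 0) = DD ℓ a ((ℓ:ℤ), y) (E, 0)
      from rfl, DD_translate']
    have hw : dWt ℓ a ℓ ((0:ℤ), y) = 1 / a ℓ y.toNat := by
      unfold dWt; rw [if_neg (by omega), if_pos rfl]
    rw [hw]
    ring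
  have etop : dWt ℓ a (ℓ + 1) ((0:ℤ), y) *
        pSum (dvec ℓ) (dWt ℓ a) ℓ (((0:ℤ), y) + dvec ℓ (ℓ + 1)) (E, 0)
      = (a ℓ y.toNat)⁻¹ * (a (ℓ + 1) y.toNat * DD ℓ a (0, y - 1) (E - ℓ + 1, 0)) := by
    have hv : dvec ℓ (ℓ + 1) = ((ℓ:ℤ) - 1, (-1:ℤ)) := by
      simp only [dvec]
      rw [if_neg (by omega), if_neg (by omega)]
    rw [hv, prod_add_fst, zero_add]
    rw [show pSum (dvec ℓ) (dWt ℓ a) ℓ ((ℓ:ℤ) - 1, y + -1) (E, 0)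
        = DD ℓ a ((ℓ:ℤ) - 1, y - 1) (E, 0) by rw [DD]; ring_nf, DD_translate']
    have hw : dWt ℓ a (ℓ + 1) ((0:ℤ), y)
        = (-1 : K) ^ (ℓ + 1 + (ℓ + 1)) * a (ℓ + 1) y.toNat / a ℓ y.toNat := by
      unfold dWt; rw [if_neg (by omega), if_neg (by omega)]
    have hsgn : (-1 : K) ^ (ℓ + 1 + (ℓ + 1)) = 1 := by
      rw [show ℓ + 1 + (ℓ + 1) = 2 * (ℓ + 1) from by ring, pow_mul]
      norm_num
    rw [hw, hsgn]
    have hx : E - ((ℓ:ℤ) - 1) = E - ℓ + 1 := by ring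
    rw [hx]
    ring
  have emid : ∀ i ∈ Finset.Icc 1 (ℓ - 1),
      dWt ℓ a i ((0:ℤ), y) * pSum (dvec ℓ) (dWt ℓ a) ℓ (((0:ℤ), y) + dvec ℓ i) (E, 0)
      = (a ℓ y.toNat)⁻¹ *
          ((-1 : K) ^ (ℓ + 1) * ((-1 : K) ^ i * a i y.toNat * DD ℓ a (0, y + ℓ - i) (E - ℓ + i, 0))) := by
    intro i hi
    simp only [Finset.mem_Icc] at hi
    have hv : dvec ℓ i = ((ℓ:ℤ) - i, (ℓ:ℤ) - i) := by
      simp only [dvec]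
      rw [if_pos (by omega)]
    rw [hv, prod_add_fst, zero_add]
    rw [show pSum (dvec ℓ) (dWt ℓ a) ℓ ((ℓ:ℤ) - i, y + ((ℓ:ℤ) - i)) (E, 0)
        = DD ℓ a ((ℓ:ℤ) - i, y + (ℓ:ℤ) - i) (E, 0) by rw [DD]; ring_nf, DD_translate']
    have hw : dWt ℓ a i ((0:ℤ), y) = (-1 : K) ^ (ℓ + 1 + i) * a i y.toNat / a ℓ y.toNat := by
      unfold dWt; rw [if_neg (by omega), if_neg (by omega)]
    have hx : E - ((ℓ:ℤ) - i) = E - ℓ + i := by ring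
    rw [hw, hx, pow_add]
    ring
  rw [e0, eℓ, etop, Finset.sum_congr rfl emid, ← Finset.mul_sum]
  field_simp
  rw [Finset.mul_sum]
  ring

end DecompD

section Values

variable {K : Type*} [Field K] {ℓ : ℕ} {a : ℕ → ℕ → K}

lemma SS_congr {y y' E E' : ℤ} (h1 : y = y') (h2 : E = E') :
    SS ℓ a (0, y) (E, 0) = SS ℓ a (0, y') (E', 0) := by rw [h1, h2]

lemma DD_congr {y y' E E' : ℤ} (h1 : y = y') (h2 : E = E') :
    DD ℓ a (0, y) (E, 0) = DD ℓ a (0, y') (E', 0) := by rw [h1, h2]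

lemma npow_neg_one_congr (j j' : ℕ) (h : j % 2 = j' % 2) : (-1 : K) ^ j = (-1) ^ j' := by
  rw [neg_one_pow_eq_pow_mod_two, neg_one_pow_eq_pow_mod_two (n := j'), h]

lemma natCast_one_le {ℓ : ℕ} (hℓ : 1 ≤ ℓ) : (1:ℤ) ≤ (ℓ:ℤ) := by exact_mod_cast hℓ

lemma SS_zero_zero (hℓ : 1 ≤ ℓ) : SS ℓ a (0, 0) (0, 0) = 1 := by
  have hl := natCast_one_le hℓ
  rw [SS_decomp hℓ 0 0 le_rfl]
  rw [if_pos ⟨rfl, rfl⟩]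
  have z1 : SS ℓ a (0, (0:ℤ) + ℓ) ((0:ℤ), 0) = 0 := SS_zero (by simp; omega)
  have z2 : SS ℓ a (0, (0:ℤ)) ((0:ℤ) - ℓ, 0) = 0 := SS_zero (by simp; omega)
  have z3 : SS ℓ a (0, (0:ℤ) - 1) ((0:ℤ) - 1, 0) = 0 := SS_zero_neg (by norm_num)
  rw [z1, z2, z3]
  rw [Finset.sum_eq_zero (fun i hi => ?_)]
  · ring
  · simp only [Finset.mem_Icc] at hi
    have : SS ℓ a (0, (0:ℤ) + ℓ - i) ((0:ℤ) - i, 0) = 0 := SS_zero (by simp; omega)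
    rw [this]
    ring

lemma DD_zero_zero (hℓ : 1 ≤ ℓ) (haℓ : ∀ j : ℕ, a ℓ j ≠ 0) : DD ℓ a (0, 0) (0, 0) = 1 := by
  have hl := natCast_one_le hℓ
  have h := DD_decomp hℓ haℓ 0 0 le_rfl
  rw [if_pos ⟨rfl, rfl⟩] at h
  have z1 : DD ℓ a (0, (0:ℤ) + ℓ) ((0:ℤ) - ℓ, 0) = 0 := by
    refine DD_zero ?_
    show (0:ℤ) - ℓ + ((ℓ:ℤ) - 1) * 0 < 0 + ((ℓ:ℤ) - 1) * (0 + ℓ)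
    nlinarith
  have z2 : DD ℓ a (0, (0:ℤ)) ((0:ℤ) - ℓ, 0) = 0 := by
    refine DD_zero ?_
    show (0:ℤ) - ℓ + ((ℓ:ℤ) - 1) * 0 < 0 + ((ℓ:ℤ) - 1) * 0
    omega
  have z3 : DD ℓ a (0, (0:ℤ) - 1) ((0:ℤ) - ℓ + 1, 0) = 0 := DD_zero_neg (by norm_num)
  rw [z1, z2, z3] at h
  rw [Finset.sum_eq_zero (fun i hi => ?_)] at h
  · have h2 : a ℓ (Int.toNat 0) * DD ℓ a (0, 0) (0, 0) = a ℓ (Int.toNat 0) * 1 := by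
      rw [h]; ring
    exact mul_left_cancel₀ (haℓ _) h2
  · simp only [Finset.mem_Icc] at hi
    have hi' : (i:ℤ) ≤ (ℓ:ℤ) - 1 := by
      have : (i:ℤ) ≤ ((ℓ - 1 : ℕ) : ℤ) := by exact_mod_cast hi.2
      omega
    have : DD ℓ a (0, (0:ℤ) + ℓ - i) ((0:ℤ) - ℓ + i, 0) = 0 := by
      refine DD_zero ?_
      show (0:ℤ) - ℓ + i + ((ℓ:ℤ) - 1) * 0 < 0 + ((ℓ:ℤ) - 1) * (0 + ℓ - i)
      nlinarith
    rw [this]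
    ring

lemma SS_diag (hℓ : 1 ≤ ℓ) (m : ℤ) (hm : 1 ≤ m) :
    SS ℓ a (0, m) (m, 0) = a (ℓ + 1) m.toNat * SS ℓ a (0, m - 1) (m - 1, 0) := by
  have hl := natCast_one_le hℓ
  rw [SS_decomp hℓ m m (by omega)]
  rw [if_neg (by rintro ⟨h1, -⟩; omega)]
  have z1 : SS ℓ a (0, m + ℓ) (m, 0) = 0 := SS_zero (by simp; omega)
  have z2 : SS ℓ a (0, m) (m - ℓ, 0) = 0 := SS_zero (by simp; omega)
  rw [z1, z2]
  rw [Finset.sum_eq_zero (fun i hi => ?_)]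
  · ring
  · simp only [Finset.mem_Icc] at hi
    have : SS ℓ a (0, m + ℓ - i) (m - i, 0) = 0 := SS_zero (by simp; omega)
    rw [this]
    ring

end Values



section Lalg

open LaurentPolynomial Polynomial

variable {K : Type*} [Field K]

lemma L_C_mul (L : LaurentPolynomial K →ₗ[K] K) (c : K) (f : LaurentPolynomial K) :
    L (LaurentPolynomial.C c * f) = c * L f := by
  rw [LaurentPolynomial.C_eq_algebraMap, ← Algebra.smul_def, map_smul, smul_eq_mul]

lemma F_rec (ℓ : ℕ) (a : ℕ → ℕ → K) (P : ℕ → Polynomial K)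
    (hrec : SatisfiesRec ℓ a P) (L : LaurentPolynomial K →ₗ[K] K)
    (n : ℕ) (hn : ℓ ≤ n) (k : ℤ) :
    L (toLaurent (P n) * T (-(ℓ : ℤ) * k)) =
      -(∑ i ∈ Finset.Icc 1 (ℓ - 1),
          a i (n - ℓ) * L (toLaurent (P (n - i)) * T (-(ℓ : ℤ) * k)))
      + L (toLaurent (P (n - ℓ)) * T (-(ℓ : ℤ) * (k - 1)))
      - a ℓ (n - ℓ) * L (toLaurent (P (n - ℓ)) * T (-(ℓ : ℤ) * k))
      - a (ℓ + 1) (n - ℓ) *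
          (if n = ℓ then 0 else L (toLaurent (P (n - ℓ - 1)) * T (-(ℓ : ℤ) * (k - 1)))) := by
  have hT : (T (-(ℓ : ℤ) * (k - 1)) : LaurentPolynomial K) = T (ℓ : ℤ) * T (-(ℓ : ℤ) * k) := by
    rw [← T_add]
    congr 1
    ring
  by_cases hnl : n = ℓ
  · have hexp : toLaurent (P n) * T (-(ℓ : ℤ) * k) =
        -(∑ i ∈ Finset.Icc 1 (ℓ - 1),
            LaurentPolynomial.C (a i (n - ℓ)) * (toLaurent (P (n - i)) * T (-(ℓ : ℤ) * k)))
        + toLaurent (P (n - ℓ)) * T (-(ℓ : ℤ) * (k - 1))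
        - LaurentPolynomial.C (a ℓ (n - ℓ)) * (toLaurent (P (n - ℓ)) * T (-(ℓ : ℤ) * k)) := by
      rw [hrec n hn, if_pos hnl]
      simp only [map_add, map_sub, map_neg, map_mul, map_sum, Polynomial.toLaurent_C,
        Polynomial.toLaurent_X_pow, mul_zero, sub_zero]
      rw [hT]
      simp only [sub_mul, add_mul, neg_mul, Finset.sum_mul, mul_assoc]
      ring
    rw [hexp, if_pos hnl]
    simp only [map_add, map_sub, map_neg, map_sum]
    rw [Finset.sum_congr rfl (fun i _ => L_C_mul L (a i (n - ℓ)) _), L_C_mul]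
    ring
  · have hexp : toLaurent (P n) * T (-(ℓ : ℤ) * k) =
        -(∑ i ∈ Finset.Icc 1 (ℓ - 1),
            LaurentPolynomial.C (a i (n - ℓ)) * (toLaurent (P (n - i)) * T (-(ℓ : ℤ) * k)))
        + toLaurent (P (n - ℓ)) * T (-(ℓ : ℤ) * (k - 1))
        - LaurentPolynomial.C (a ℓ (n - ℓ)) * (toLaurent (P (n - ℓ)) * T (-(ℓ : ℤ) * k))
        - LaurentPolynomial.C (a (ℓ + 1) (n - ℓ)) *
            (toLaurent (P (n - ℓ - 1)) * T (-(ℓ : ℤ) * (k - 1))) := by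
      rw [hrec n hn, if_neg hnl]
      simp only [map_add, map_sub, map_neg, map_mul, map_sum, Polynomial.toLaurent_C,
        Polynomial.toLaurent_X_pow]
      rw [hT]
      simp only [sub_mul, add_mul, neg_mul, Finset.sum_mul, mul_assoc]
      ring
    rw [hexp, if_neg hnl]
    simp only [map_add, map_sub, map_neg, map_sum]
    rw [Finset.sum_congr rfl (fun i _ => L_C_mul L (a i (n - ℓ)) _), L_C_mul, L_C_mul]

lemma F_base (ℓ : ℕ) (a : ℕ → ℕ → K) (P : ℕ → Polynomial K)
    (hinit : ∀ n : ℕ, n < ℓ → P n = Polynomial.X ^ n)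
    (L : LaurentPolynomial K →ₗ[K] K)
    (hL : ∀ t : ℤ, L (LaurentPolynomial.T t) = combMoment ℓ a t)
    (n : ℕ) (hn : n < ℓ) (k : ℤ) :
    L (toLaurent (P n) * T (-(ℓ : ℤ) * k)) = combMoment ℓ a ((n : ℤ) - ℓ * k) := by
  rw [hinit n hn, Polynomial.toLaurent_X_pow, ← T_add,
    show (n : ℤ) + -(ℓ : ℤ) * k = (n : ℤ) - ℓ * k from by ring, hL]

end Lalg


section Bridge

variable {K : Type*} [Field K] {ℓ : ℕ} {a : ℕ → ℕ → K}

lemma finsum_dual (p q : ℤ × ℤ) :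
    ∑ᶠ ω ∈ {ω : List ℕ | IsDualSchroder ℓ p ω ∧ endPt (dvec ℓ) p ω = q},
      pathWt (dvec ℓ) (dWt ℓ a) p ω = DD ℓ a p q := by
  rw [DD, pSum]
  congr 1
  ext ω
  simp [IsDualSchroder, ValidP, and_assoc]

lemma finsum_schroder (p q : ℤ × ℤ) :
    ∑ᶠ ω ∈ {ω : List ℕ | IsSchroder ℓ p ω ∧ endPt (svec ℓ) p ω = q},
      pathWt (svec ℓ) (aWt a) p ω = SS ℓ a p q := by
  rw [SS, pSum]
  congr 1
  ext ω
  simp [IsSchroder, ValidP, and_assoc]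

lemma wD_eq (M : ℤ) : wD ℓ a M = DD ℓ a (0, (-M) % (ℓ : ℤ)) (M, 0) := by
  rw [wD]
  exact finsum_dual _ _

lemma wB_eq (M : ℤ) : wB ℓ a M = SS ℓ a (0, M % (ℓ : ℤ)) (M, 0) := by
  rw [wB]
  exact finsum_schroder _ _

lemma combMoment_nonpos (hℓ : 1 ≤ ℓ) {t : ℤ} (ht : t ≤ 0) :
    combMoment ℓ a t = (-1 : K) ^ (t % (ℓ : ℤ)).toNat * DD ℓ a (0, t % (ℓ : ℤ)) (-t, 0) := by
  have hl : (1 : ℤ) ≤ (ℓ : ℤ) := by exact_mod_cast hℓ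
  rw [combMoment, if_neg (by omega), if_neg (by omega), wD_eq, neg_neg]

lemma combMoment_mid (hℓ : 1 ≤ ℓ) {t : ℤ} (h1 : 1 ≤ t) (h2 : t < (ℓ : ℤ)) :
    combMoment ℓ a t = 0 := by
  rw [combMoment, if_neg (by omega), if_pos (by omega)]

lemma combMoment_big (hℓ : 1 ≤ ℓ) {t : ℤ} (ht : (ℓ : ℤ) ≤ t) :
    combMoment ℓ a t = a ℓ 0 * SS ℓ a (0, (t - ℓ) % (ℓ : ℤ)) (t - ℓ, 0) := by
  rw [combMoment, if_pos ht, wB_eq]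

end Bridge

set_option maxHeartbeats 2000000 in
/-- **General orthogonality.** For the functional `L` given by the
combinatorial moments and the primitive `ℓ`-LBPs `P`:
`L (P n · x^{-ℓk})` equals `(-1)^n` times the weighted sum over dual
`ℓ`-Schröder paths from `(0,n)` to `(ℓk - n, 0)` if `n ≤ k`; it vanishes for
`0 ≤ k ≤ n-1`; and it equals `a ℓ 0` times the weighted sum over
`ℓ`-Schröder paths from `(0,n)` to `(n - ℓ(k+1), 0)` if `k < 0`. -/
theorem general_orthogonality {K : Type*} [Field K]
    (ℓ : ℕ) (hℓ : 1 ≤ ℓ) (a : ℕ → ℕ → K)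
    (haℓ : ∀ j : ℕ, a ℓ j ≠ 0) (haℓ1 : ∀ j : ℕ, a (ℓ + 1) j ≠ 0)
    (P : ℕ → Polynomial K)
    (hinit : ∀ n : ℕ, n < ℓ → P n = Polynomial.X ^ n)
    (hrec : SatisfiesRec ℓ a P)
    (L : LaurentPolynomial K →ₗ[K] K)
    (hL : ∀ n : ℤ, L (LaurentPolynomial.T n) = combMoment ℓ a n) :
    ∀ (n : ℕ) (k : ℤ),
      ((n : ℤ) ≤ k →
        L (Polynomial.toLaurent (P n) * LaurentPolynomial.T (-(ℓ : ℤ) * k)) =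
          (-1 : K) ^ n * ∑ᶠ ω ∈ {ω : List ℕ | IsDualSchroder ℓ (0, (n : ℤ)) ω ∧
            endPt (dvec ℓ) (0, (n : ℤ)) ω = ((ℓ : ℤ) * k - n, 0)},
            pathWt (dvec ℓ) (dWt ℓ a) (0, (n : ℤ)) ω) ∧
      (0 ≤ k → k ≤ (n : ℤ) - 1 →
        L (Polynomial.toLaurent (P n) * LaurentPolynomial.T (-(ℓ : ℤ) * k)) = 0) ∧
      (k < 0 →
        L (Polynomial.toLaurent (P n) * LaurentPolynomial.T (-(ℓ : ℤ) * k)) =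
          a ℓ 0 * ∑ᶠ ω ∈ {ω : List ℕ | IsSchroder ℓ (0, (n : ℤ)) ω ∧
            endPt (svec ℓ) (0, (n : ℤ)) ω = ((n : ℤ) - (ℓ : ℤ) * (k + 1), 0)},
            pathWt (svec ℓ) (aWt a) (0, (n : ℤ)) ω) := by
  classical
  have hl1 : (1 : ℤ) ≤ (ℓ : ℤ) := by exact_mod_cast hℓ
  have master : ∀ n : ℕ, ∀ k : ℤ,
      (0 ≤ k → L (Polynomial.toLaurent (P n) * LaurentPolynomial.T (-(ℓ : ℤ) * k)) =
        (-1 : K) ^ n * DD ℓ a (0, (n : ℤ)) ((ℓ : ℤ) * k - n, 0)) ∧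
      (k < 0 → L (Polynomial.toLaurent (P n) * LaurentPolynomial.T (-(ℓ : ℤ) * k)) =
        a ℓ 0 * SS ℓ a (0, (n : ℤ)) ((n : ℤ) - ℓ * (k + 1), 0)) := by
    intro n
    induction n using Nat.strong_induction_on with
    | _ n IH =>
    intro k
    by_cases hn : n < ℓ
    · -- base case
      have hFb := F_base ℓ a P hinit L hL n hn
      have hmod : ∀ j : ℤ, ((n : ℤ) + (ℓ : ℤ) * j) % (ℓ : ℤ) = (n : ℤ) := by
        intro j
        rw [Int.add_mul_emod_self_left, Int.emod_eq_of_lt (by positivity) (by exact_mod_cast hn)]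
      constructor
      · intro hk
        rw [hFb k]
        rcases eq_or_lt_of_le hk with hk0 | hk1
        · -- k = 0
          have hk' : k = 0 := hk0.symm
          subst hk'
          rcases Nat.eq_zero_or_pos n with hn0 | hn1
          · subst hn0
            simp only [Nat.cast_zero]
            rw [show (0:ℤ) - (ℓ:ℤ) * 0 = 0 from by ring]
            rw [combMoment_nonpos hℓ le_rfl]
            simp only [Int.zero_emod, Int.toNat_zero, pow_zero, neg_zero, mul_zero, zero_sub,
              neg_zero]
          · rw [show (n:ℤ) - (ℓ:ℤ) * 0 = (n:ℤ) from by ring]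
            rw [combMoment_mid hℓ (by exact_mod_cast hn1) (by exact_mod_cast hn)]
            have h1n : (1:ℤ) ≤ (n:ℤ) := by exact_mod_cast hn1
            have hz : DD ℓ a (0, (n:ℤ)) ((ℓ:ℤ) * 0 - n, 0) = 0 := by
              refine DD_zero ?_
              show (ℓ:ℤ) * 0 - n + ((ℓ:ℤ) - 1) * 0 < 0 + ((ℓ:ℤ) - 1) * n
              have hnn : (0:ℤ) ≤ ((ℓ:ℤ) - 1) * n := mul_nonneg (by omega) (by positivity)
              linarith
            rw [hz, mul_zero]
        · -- k ≥ 1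
          have hcast : (n:ℤ) < (ℓ:ℤ) := by exact_mod_cast hn
          have hlk : (ℓ:ℤ) * 1 ≤ (ℓ:ℤ) * k :=
            mul_le_mul_of_nonneg_left (by omega) (by omega)
          have ht : (n:ℤ) - ℓ * k ≤ 0 := by linarith
          rw [combMoment_nonpos hℓ ht]
          have hm2 : ((n:ℤ) - ℓ * k) % (ℓ:ℤ) = (n:ℤ) := by
            rw [show (n:ℤ) - ℓ * k = (n:ℤ) + (ℓ:ℤ) * (-k) from by ring]
            exact hmod (-k)
          rw [hm2, Int.toNat_natCast]
          rw [show -((n:ℤ) - ℓ * k) = (ℓ:ℤ) * k - n from by ring]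
      · intro hk
        rw [hFb k]
        have hcast : (n:ℤ) < (ℓ:ℤ) := by exact_mod_cast hn
        have hlk : (ℓ:ℤ) * 1 ≤ (ℓ:ℤ) * (-k) :=
          mul_le_mul_of_nonneg_left (by omega) (by omega)
        have ht : (ℓ:ℤ) ≤ (n:ℤ) - ℓ * k := by nlinarith
        rw [combMoment_big hℓ ht]
        rw [show (n:ℤ) - ℓ * k - ℓ = (n:ℤ) + (ℓ:ℤ) * (-k - 1) from by ring, hmod (-k - 1)]
        rw [SS_congr rfl (show (n:ℤ) + (ℓ:ℤ) * (-k - 1) = (n:ℤ) - ℓ * (k + 1) from by ring)]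
    · -- inductive step
      push_neg at hn
      have hFr := F_rec ℓ a P hrec L n hn
      have e2 : ((n - ℓ : ℕ) : ℤ) = (n : ℤ) - ℓ := by omega
      have etn : ((n : ℤ) - ℓ).toNat = n - ℓ := by omega
      constructor
      · intro hk
        rcases eq_or_lt_of_le hk with hk0 | hk1
        · -- k = 0
          have hk' : k = 0 := hk0.symm
          subst hk'
          rw [hFr 0]
          have hz0 : ∀ i ∈ Finset.Icc 1 (ℓ - 1),
              a i (n - ℓ) * L (Polynomial.toLaurent (P (n - i)) * LaurentPolynomial.T (-(ℓ:ℤ) * 0)) = 0 := by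
            intro i hi
            simp only [Finset.mem_Icc] at hi
            rw [(IH (n - i) (by omega) 0).1 le_rfl]
            have hz : DD ℓ a (0, ((n - i : ℕ):ℤ)) ((ℓ:ℤ) * 0 - ((n - i : ℕ):ℤ), 0) = 0 := by
              refine DD_zero ?_
              show (ℓ:ℤ) * 0 - ((n - i : ℕ):ℤ) + ((ℓ:ℤ) - 1) * 0 <
                0 + ((ℓ:ℤ) - 1) * ((n - i : ℕ):ℤ)
              have hnn : (0:ℤ) ≤ ((ℓ:ℤ) - 1) * ((n - i : ℕ):ℤ) :=
                mul_nonneg (by omega) (by omega)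
              have h1 : (1:ℤ) ≤ ((n - i : ℕ):ℤ) := by omega
              linarith
            rw [hz]
            ring
          rw [Finset.sum_congr rfl hz0, Finset.sum_const_zero]
          have hzt : DD ℓ a (0, (n:ℤ)) ((ℓ:ℤ) * 0 - n, 0) = 0 := by
            refine DD_zero ?_
            show (ℓ:ℤ) * 0 - n + ((ℓ:ℤ) - 1) * 0 < 0 + ((ℓ:ℤ) - 1) * n
            have hnn : (0:ℤ) ≤ ((ℓ:ℤ) - 1) * (n:ℤ) := mul_nonneg (by omega) (by positivity)
            have h1 : (1:ℤ) ≤ (n:ℤ) := by omega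
            linarith
          rw [hzt]
          rw [(IH (n - ℓ) (by omega) (0 - 1)).2 (by omega)]
          rw [(IH (n - ℓ) (by omega) 0).1 le_rfl]
          by_cases hnl : n = ℓ
          · rw [if_pos hnl]
            have hc : ((n - ℓ : ℕ):ℤ) = 0 := by omega
            rw [SS_congr hc (show ((n - ℓ : ℕ):ℤ) - (ℓ:ℤ) * ((0 - 1) + 1) = 0 from by
              rw [hc]; ring)]
            rw [DD_congr hc (show (ℓ:ℤ) * 0 - ((n - ℓ : ℕ):ℤ) = 0 from by rw [hc]; ring)]
            rw [SS_zero_zero hℓ, DD_zero_zero hℓ haℓ]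
            rw [show n - ℓ = 0 from by omega]
            norm_num
          · rw [if_neg hnl]
            rw [(IH (n - ℓ - 1) (by omega) (0 - 1)).2 (by omega)]
            have hz2 : DD ℓ a (0, ((n - ℓ : ℕ):ℤ)) ((ℓ:ℤ) * 0 - ((n - ℓ : ℕ):ℤ), 0) = 0 := by
              refine DD_zero ?_
              show (ℓ:ℤ) * 0 - ((n - ℓ : ℕ):ℤ) + ((ℓ:ℤ) - 1) * 0 <
                0 + ((ℓ:ℤ) - 1) * ((n - ℓ : ℕ):ℤ)
              have hnn : (0:ℤ) ≤ ((ℓ:ℤ) - 1) * ((n - ℓ : ℕ):ℤ) :=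
                mul_nonneg (by omega) (by omega)
              have h1 : (1:ℤ) ≤ ((n - ℓ : ℕ):ℤ) := by omega
              linarith
            rw [hz2]
            have hdiag := SS_diag (a := a) hℓ ((n:ℤ) - ℓ) (by omega)
            rw [etn] at hdiag
            rw [SS_congr e2 (show ((n - ℓ : ℕ):ℤ) - (ℓ:ℤ) * ((0 - 1) + 1) = (n:ℤ) - ℓ from by
              rw [e2]; ring)]
            rw [SS_congr (show ((n - ℓ - 1 : ℕ):ℤ) = (n:ℤ) - ℓ - 1 from by omega)
              (show ((n - ℓ - 1 : ℕ):ℤ) - (ℓ:ℤ) * ((0 - 1) + 1) = (n:ℤ) - ℓ - 1 from by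
                have hc : ((n - ℓ - 1 : ℕ):ℤ) = (n:ℤ) - ℓ - 1 := by omega
                rw [hc]; ring)]
            ring_nf at hdiag ⊢
            linear_combination (a ℓ 0) * hdiag
        · -- k ≥ 1
          rw [hFr k]
          have hIH1 : ∀ i ∈ Finset.Icc 1 (ℓ - 1),
              a i (n - ℓ) * L (Polynomial.toLaurent (P (n - i)) * LaurentPolynomial.T (-(ℓ:ℤ) * k)) =
              (-1:K) ^ n * ((-1:K) ^ i * a i (n - ℓ) *
                DD ℓ a (0, (n:ℤ) - ℓ + ℓ - i) ((ℓ:ℤ) * k - ((n:ℤ) - ℓ) - ℓ + i, 0)) := by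
            intro i hi
            simp only [Finset.mem_Icc] at hi
            rw [(IH (n - i) (by omega) k).1 (by omega)]
            rw [DD_congr (show ((n - i : ℕ):ℤ) = (n:ℤ) - ℓ + ℓ - i from by omega)
              (show (ℓ:ℤ) * k - ((n - i : ℕ):ℤ) = (ℓ:ℤ) * k - ((n:ℤ) - ℓ) - ℓ + i from by
                have hc : ((n - i : ℕ):ℤ) = (n:ℤ) - i := by omega
                rw [hc]; ring)]
            rw [show (-1:K) ^ (n - i) = (-1:K) ^ n * (-1:K) ^ i from by
              rw [npow_neg_one_congr (n - i) (n + i) (by omega), pow_add]]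
            ring
          rw [Finset.sum_congr rfl hIH1, ← Finset.mul_sum]
          rw [(IH (n - ℓ) (by omega) (k - 1)).1 (by omega)]
          rw [(IH (n - ℓ) (by omega) k).1 (by omega)]
          have hsl : (-1:K) ^ (n - ℓ) = (-1:K) ^ n * (-1:K) ^ ℓ := by
            rw [npow_neg_one_congr (n - ℓ) (n + ℓ) (by omega), pow_add]
          simp only [hsl, e2]
          have hdecD := DD_decomp (a := a) hℓ haℓ ((n:ℤ) - ℓ) ((ℓ:ℤ) * k - ((n:ℤ) - ℓ))
            (by omega)
          rw [if_neg (by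
            rintro ⟨c1, c2⟩
            have hlk : (ℓ:ℤ) * 1 ≤ (ℓ:ℤ) * k := mul_le_mul_of_nonneg_left (by omega) (by omega)
            nlinarith), etn] at hdecD
          simp only [pow_succ] at hdecD
          by_cases hnl : n = ℓ
          · rw [if_pos hnl]
            have hzz : DD ℓ a (0, (n:ℤ) - ℓ - 1) ((ℓ:ℤ) * k - ((n:ℤ) - ℓ) - ℓ + 1, 0) = 0 :=
              DD_zero_neg (by simp; omega)
            rw [hzz] at hdecD
            rcases Nat.even_or_odd ℓ with hpar | hpar
            · have hsℓ : (-1:K) ^ ℓ = 1 := Even.neg_one_pow hpar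
              simp only [hsℓ] at hdecD ⊢
              ring_nf at hdecD ⊢
              linear_combination (-(-1:K) ^ n) * hdecD
            · have hsℓ : (-1:K) ^ ℓ = -1 := Odd.neg_one_pow hpar
              simp only [hsℓ] at hdecD ⊢
              ring_nf at hdecD ⊢
              linear_combination ((-1:K) ^ n) * hdecD
          · rw [if_neg hnl]
            rw [(IH (n - ℓ - 1) (by omega) (k - 1)).1 (by omega)]
            rw [DD_congr (show ((n - ℓ - 1 : ℕ):ℤ) = (n:ℤ) - ℓ - 1 from by omega)
              (show (ℓ:ℤ) * (k - 1) - ((n - ℓ - 1 : ℕ):ℤ) =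
                  (ℓ:ℤ) * k - ((n:ℤ) - ℓ) - ℓ + 1 from by
                have hc : ((n - ℓ - 1 : ℕ):ℤ) = (n:ℤ) - ℓ - 1 := by omega
                rw [hc]; ring)]
            rw [show (-1:K) ^ (n - ℓ - 1) = (-1:K) ^ n * (-1:K) ^ ℓ * (-1) from by
              rw [npow_neg_one_congr (n - ℓ - 1) (n + ℓ + 1) (by omega), pow_add, pow_add,
                pow_one]]
            rcases Nat.even_or_odd ℓ with hpar | hpar
            · have hsℓ : (-1:K) ^ ℓ = 1 := Even.neg_one_pow hpar
              simp only [hsℓ] at hdecD ⊢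
              ring_nf at hdecD ⊢
              linear_combination (-(-1:K) ^ n) * hdecD
            · have hsℓ : (-1:K) ^ ℓ = -1 := Odd.neg_one_pow hpar
              simp only [hsℓ] at hdecD ⊢
              ring_nf at hdecD ⊢
              linear_combination ((-1:K) ^ n) * hdecD
      · intro hk
        rw [hFr k]
        have hIH1 : ∀ i ∈ Finset.Icc 1 (ℓ - 1),
            a i (n - ℓ) * L (Polynomial.toLaurent (P (n - i)) * LaurentPolynomial.T (-(ℓ:ℤ) * k)) =
            a ℓ 0 * (a i (n - ℓ) * SS ℓ a (0, (n:ℤ) - ℓ + ℓ - i) ((n:ℤ) - ℓ - ℓ * k - i, 0)) := by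
          intro i hi
          simp only [Finset.mem_Icc] at hi
          rw [(IH (n - i) (by omega) k).2 hk]
          rw [SS_congr (show ((n - i : ℕ):ℤ) = (n:ℤ) - ℓ + ℓ - i from by omega)
            (show ((n - i : ℕ):ℤ) - (ℓ:ℤ) * (k + 1) = (n:ℤ) - ℓ - ℓ * k - i from by
              have hc : ((n - i : ℕ):ℤ) = (n:ℤ) - i := by omega
              rw [hc]; ring)]
          ring
        rw [Finset.sum_congr rfl hIH1, ← Finset.mul_sum]
        rw [(IH (n - ℓ) (by omega) (k - 1)).2 (by omega)]
        rw [(IH (n - ℓ) (by omega) k).2 hk]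
        have hdec := SS_decomp (a := a) hℓ ((n:ℤ) - ℓ) ((n:ℤ) - ℓ - ℓ * k) (by omega)
        rw [if_neg (by
          rintro ⟨c1, c2⟩
          have hlk : (ℓ:ℤ) * 1 ≤ (ℓ:ℤ) * (-k) := mul_le_mul_of_nonneg_left (by omega) (by omega)
          nlinarith), etn] at hdec
        rw [e2]
        by_cases hnl : n = ℓ
        · rw [if_pos hnl, mul_zero]
          have hzz : SS ℓ a (0, (n:ℤ) - ℓ - 1) ((n:ℤ) - ℓ - ℓ * k - 1, 0) = 0 :=
            SS_zero_neg (by simp; omega)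
          rw [hzz, mul_zero, add_zero] at hdec
          ring_nf at hdec ⊢
          linear_combination (a ℓ 0) * hdec
        · rw [if_neg hnl]
          rw [(IH (n - ℓ - 1) (by omega) (k - 1)).2 (by omega)]
          rw [SS_congr (show ((n - ℓ - 1 : ℕ):ℤ) = (n:ℤ) - ℓ - 1 from by omega)
            (show ((n - ℓ - 1 : ℕ):ℤ) - (ℓ:ℤ) * ((k - 1) + 1) = (n:ℤ) - ℓ - ℓ * k - 1 from by
              have hc : ((n - ℓ - 1 : ℕ):ℤ) = (n:ℤ) - ℓ - 1 := by omega
              rw [hc]; ring)]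
          ring_nf at hdec ⊢
          linear_combination (a ℓ 0) * hdec
  intro n k
  refine ⟨?_, ?_, ?_⟩
  · intro hnk
    rw [finsum_dual]
    exact (master n k).1 (le_trans (by positivity) hnk)
  · intro hk0 hk1
    rw [(master n k).1 hk0]
    have hz : DD ℓ a (0, (n : ℤ)) ((ℓ : ℤ) * k - n, 0) = 0 := by
      refine DD_zero ?_
      show (ℓ : ℤ) * k - n + ((ℓ : ℤ) - 1) * 0 < 0 + ((ℓ : ℤ) - 1) * n
      have : (ℓ : ℤ) * k + ℓ ≤ (ℓ : ℤ) * n := by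
        have := mul_le_mul_of_nonneg_left (show k + 1 ≤ (n : ℤ) by omega) (by omega : (0:ℤ) ≤ (ℓ:ℤ))
        nlinarith
      nlinarith
    rw [hz, mul_zero]
  · intro hk
    rw [finsum_schroder]
    exact (master n k).2 hk
end
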